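/- arXiv:1106.4684 — 6 statements merged into one kernel-verified Lean document; each statement's English description precedes it below -/
import Mathlib

section
/- For I = 1 and any positive integer s, the partition sum Σ_{π ⊂ J} D_π H_π(s) equals J! · S_2(s, J), where S_2 denotes Stirling numbers of the second kind. In particular it vanishes whenever s < J. -/
open Finset

/-- `D_π` for a partition `π` of `J`. -/
noncomputable def Dpi (J : ℕ) (p : Nat.Partition J) : ℚ :=
  (-1) ^ (Multiset.card p.parts - 1) * (J.factorial : ℚ) /
      (((p.parts.map Nat.factorial).prod : ℕ) * (Multiset.card p.parts : ℚ)) *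
    (((Multiset.card p.parts).factorial : ℚ) /
      ∏ i ∈ Finset.range (J + 1), ((p.parts.count i).factorial : ℚ))

/-- `H_π(s) = Σ_{i=1}^J i^s m_i`. -/
def Hpi (J : ℕ) (p : Nat.Partition J) (s : ℕ) : ℚ :=
  ((p.parts.map fun i => i ^ s).sum : ℕ)

/-- Stirling numbers of the second kind. -/
def stirling2 : ℕ → ℕ → ℕ
  | 0, 0 => 1
  | 0, _ + 1 => 0
  | _ + 1, 0 => 0
  | n + 1, k + 1 => (k + 1) * stirling2 n (k + 1) + stirling2 n k


/-- weight of a multiset of parts: `(-1)^k k! / (∏ i! · ∏ m_i!)`. -/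
noncomputable def wgt (t : Multiset ℕ) : ℚ :=
  (-1) ^ (Multiset.card t) * ((Multiset.card t).factorial : ℚ) /
    (((t.map Nat.factorial).prod : ℕ) * ∏ i ∈ t.toFinset, ((t.count i).factorial : ℚ))

lemma prod_fac_ne_zero (t : Multiset ℕ) : (((t.map Nat.factorial).prod : ℕ) : ℚ) ≠ 0 := by
  have : 0 < (t.map Nat.factorial).prod :=
    Multiset.prod_pos (by simp +contextual [Nat.factorial_pos])
  exact_mod_cast this.ne'

lemma prod_count_fac_ne_zero (t : Multiset ℕ) :
    (∏ i ∈ t.toFinset, ((t.count i).factorial : ℚ)) ≠ 0 := by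
  positivity

lemma count_mul_wgt (a : ℕ) (t : Multiset ℕ) :
    (((a ::ₘ t).count a : ℕ) : ℚ) * wgt (a ::ₘ t)
      = -((Multiset.card t : ℚ) + 1) / (a.factorial : ℚ) * wgt t := by
  unfold wgt
  have hPt := prod_fac_ne_zero t
  have hMt := prod_count_fac_ne_zero t
  have hfa : ((a.factorial : ℕ) : ℚ) ≠ 0 := by positivity
  have hprodmap : (((a ::ₘ t).map Nat.factorial).prod : ℚ)
      = (a.factorial : ℚ) * ((t.map Nat.factorial).prod : ℕ) := by
    rw [Multiset.map_cons, Multiset.prod_cons]; push_cast; ring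
  by_cases ha : a ∈ t
  · -- `a` already occurs in `t`
    have htf : (a ::ₘ t).toFinset = t.toFinset := by
      rw [Multiset.toFinset_cons, Finset.insert_eq_self.2 (Multiset.mem_toFinset.2 ha)]
    have hprod : (∏ i ∈ (a ::ₘ t).toFinset, (((a ::ₘ t).count i).factorial : ℚ))
        = (t.count a + 1) * ∏ i ∈ t.toFinset, ((t.count i).factorial : ℚ) := by
      rw [htf]
      rw [← Finset.prod_erase_mul _ _ (Multiset.mem_toFinset.2 ha),
          ← Finset.prod_erase_mul _ _ (Multiset.mem_toFinset.2 ha)]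
      have h1 : ∀ i ∈ t.toFinset.erase a, (((a ::ₘ t).count i).factorial : ℚ)
          = ((t.count i).factorial : ℚ) := by
        intro i hi
        rw [Multiset.count_cons_of_ne (Finset.ne_of_mem_erase hi)]
      rw [Finset.prod_congr rfl h1, Multiset.count_cons_self, Nat.factorial_succ]
      push_cast; ring
    have hcount : (((a ::ₘ t).count a : ℕ) : ℚ) = (t.count a : ℚ) + 1 := by
      rw [Multiset.count_cons_self]; push_cast; ring
    rw [hcount, hprod, hprodmap]
    have hca : ((t.count a : ℚ) + 1) ≠ 0 := by positivity
    simp only [Multiset.card_cons]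
    have e1 : (((Multiset.card t) + 1).factorial : ℚ)
        = ((Multiset.card t : ℚ) + 1) * ((Multiset.card t).factorial : ℚ) := by
      rw [Nat.factorial_succ]; push_cast; ring
    rw [e1, pow_succ]
    set P := (((t.map Nat.factorial).prod : ℕ) : ℚ)
    set M := ∏ i ∈ t.toFinset, ((t.count i).factorial : ℚ)
    set K := ((Multiset.card t).factorial : ℚ)
    set k := ((Multiset.card t : ℕ) : ℚ)
    field_simp
  · -- `a` is new
    have hant : a ∉ t.toFinset := fun h => ha (Multiset.mem_toFinset.1 h)
    have hprod : (∏ i ∈ (a ::ₘ t).toFinset, (((a ::ₘ t).count i).factorial : ℚ))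
        = ∏ i ∈ t.toFinset, ((t.count i).factorial : ℚ) := by
      rw [Multiset.toFinset_cons, Finset.prod_insert hant]
      have h1 : ∀ i ∈ t.toFinset, (((a ::ₘ t).count i).factorial : ℚ)
          = ((t.count i).factorial : ℚ) := by
        intro i hi
        rw [Multiset.count_cons_of_ne]
        intro h; exact hant (h ▸ hi)
      rw [Finset.prod_congr rfl h1, Multiset.count_cons_self,
          Multiset.count_eq_zero_of_notMem ha]
      norm_num
    have hcount : (((a ::ₘ t).count a : ℕ) : ℚ) = 1 := by
      rw [Multiset.count_cons_self, Multiset.count_eq_zero_of_notMem ha]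
      norm_num
    rw [hcount, hprod, hprodmap]
    simp only [Multiset.card_cons]
    have e1 : (((Multiset.card t) + 1).factorial : ℚ)
        = ((Multiset.card t : ℚ) + 1) * ((Multiset.card t).factorial : ℚ) := by
      rw [Nat.factorial_succ]; push_cast; ring
    rw [e1, pow_succ]
    set P := (((t.map Nat.factorial).prod : ℕ) : ℚ)
    set M := ∏ i ∈ t.toFinset, ((t.count i).factorial : ℚ)
    set K := ((Multiset.card t).factorial : ℚ)
    set k := ((Multiset.card t : ℕ) : ℚ)
    field_simp

lemma wgt_def (t : Multiset ℕ) : wgt t =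
  (-1) ^ (Multiset.card t) * ((Multiset.card t).factorial : ℚ) /
    (((t.map Nat.factorial).prod : ℕ) * ∏ i ∈ t.toFinset, ((t.count i).factorial : ℚ)) := rfl

lemma wgt_zero : wgt 0 = 1 := by
  rw [wgt_def]
  simp

lemma fac_cast_ne_zero (n : ℕ) : ((n.factorial : ℕ) : ℚ) ≠ 0 :=
  Nat.cast_ne_zero.2 (Nat.factorial_ne_zero n)


/-- Insert a part `a` into a partition of `n - a`. -/
def insertPart {n a : ℕ} (ha1 : 1 ≤ a) (ha2 : a ≤ n) (q : Nat.Partition (n - a)) :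
    Nat.Partition n where
  parts := a ::ₘ q.parts
  parts_pos := by
    intro i hi
    rcases Multiset.mem_cons.1 hi with h | h
    · omega
    · exact q.parts_pos h
  parts_sum := by
    rw [Multiset.sum_cons, q.parts_sum]; omega

lemma mem_Icc_of_mem_parts {n : ℕ} (p : Nat.Partition n) {a : ℕ} (ha : a ∈ p.parts) :
    a ∈ Finset.Icc 1 n := by
  have h1 : 0 < a := p.parts_pos ha
  have h2 : a ≤ n := p.parts_sum ▸ Multiset.le_sum_of_mem ha
  exact Finset.mem_Icc.2 ⟨h1, h2⟩

lemma key_bij (n : ℕ) (F : Multiset ℕ → ℕ → ℚ) :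
    ∑ p : Nat.Partition n, ∑ a ∈ p.parts.toFinset, F p.parts a
      = ∑ a ∈ Finset.Icc 1 n, ∑ q : Nat.Partition (n - a), F (a ::ₘ q.parts) a := by
  have h1 : ∀ p : Nat.Partition n, ∑ a ∈ p.parts.toFinset, F p.parts a
      = ∑ a ∈ Finset.Icc 1 n, if a ∈ p.parts.toFinset then F p.parts a else 0 := by
    intro p
    rw [Finset.sum_ite_mem, Finset.inter_eq_right.2]
    intro a ha
    exact mem_Icc_of_mem_parts p (Multiset.mem_toFinset.1 ha)
  simp only [h1]
  rw [Finset.sum_comm]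
  refine Finset.sum_congr rfl ?_
  intro a ha
  rw [Finset.mem_Icc] at ha
  obtain ⟨ha1, ha2⟩ := ha
  rw [← Finset.sum_filter]
  refine (Finset.sum_bij (fun (q : Nat.Partition (n - a)) (_ : q ∈ Finset.univ) =>
    insertPart ha1 ha2 q) ?_ ?_ ?_ ?_).symm
  · intro q _
    simp only [Finset.mem_filter, Finset.mem_univ, true_and, Multiset.mem_toFinset]
    exact Multiset.mem_cons_self a q.parts
  · intro q1 _ q2 _ h
    have := congrArg (Nat.Partition.parts) h
    simp only [insertPart] at this
    exact Nat.Partition.ext (Multiset.cons_inj_right a |>.1 this)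
  · intro p hp
    simp only [Finset.mem_filter, Finset.mem_univ, true_and, Multiset.mem_toFinset] at hp
    have hsum : (p.parts.erase a).sum = n - a := by
      have := Multiset.cons_erase hp
      have h2 := p.parts_sum
      rw [← this, Multiset.sum_cons] at h2
      omega
    refine ⟨⟨p.parts.erase a, ?_, hsum⟩, Finset.mem_univ _, ?_⟩
    · intro i hi
      exact p.parts_pos (Multiset.mem_of_mem_erase hi)
    · exact Nat.Partition.ext (Multiset.cons_erase hp)
  · intro q _
    rfl
noncomputable def Upart (n : ℕ) : ℚ := ∑ p : Nat.Partition n, wgt p.parts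
noncomputable def Vpart (n : ℕ) : ℚ :=
  ∑ p : Nat.Partition n, (Multiset.card p.parts : ℚ) * wgt p.parts

lemma Upart_zero : Upart 0 = 1 := by
  rw [Upart, Finset.univ_unique, Finset.sum_singleton]
  show wgt (default : Nat.Partition 0).parts = 1
  exact wgt_zero

lemma Vpart_zero : Vpart 0 = 0 := by
  rw [Vpart, Finset.univ_unique, Finset.sum_singleton]
  show (Multiset.card (default : Nat.Partition 0).parts : ℚ) * _ = 0
  simp [show (default : Nat.Partition 0).parts = 0 from rfl]

lemma card_eq_sum_count (t : Multiset ℕ) :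
    (Multiset.card t : ℚ) = ∑ a ∈ t.toFinset, ((t.count a : ℕ) : ℚ) := by
  rw [← Multiset.toFinset_sum_count_eq t]
  push_cast
  rfl

lemma sum_eq_sum_count (t : Multiset ℕ) :
    ((t.sum : ℕ) : ℚ) = ∑ a ∈ t.toFinset, ((t.count a : ℕ) : ℚ) * (a : ℚ) := by
  have h : t.sum = ∑ a ∈ t.toFinset, t.count a * a := by
    nth_rewrite 1 [show t = t.map id from (Multiset.map_id t).symm]
    rw [Finset.sum_multiset_map_count]
    simp [smul_eq_mul]
  rw [h]
  push_cast
  rfl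

lemma Vpart_rec (n : ℕ) :
    Vpart n = ∑ a ∈ Finset.Icc 1 n,
      -(Vpart (n - a) + Upart (n - a)) / (a.factorial : ℚ) := by
  have h : Vpart n = ∑ p : Nat.Partition n,
      ∑ a ∈ p.parts.toFinset, ((p.parts.count a : ℕ) : ℚ) * wgt p.parts := by
    rw [Vpart]
    refine Finset.sum_congr rfl fun p _ => ?_
    rw [card_eq_sum_count, Finset.sum_mul]
  rw [h, key_bij n (fun t a => ((t.count a : ℕ) : ℚ) * wgt t)]
  refine Finset.sum_congr rfl fun a _ => ?_
  have : ∀ q : Nat.Partition (n - a),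
      (((a ::ₘ q.parts).count a : ℕ) : ℚ) * wgt (a ::ₘ q.parts)
        = -((Multiset.card q.parts : ℚ) * wgt q.parts + wgt q.parts) / (a.factorial : ℚ) := by
    intro q
    rw [count_mul_wgt]
    ring
  rw [Finset.sum_congr rfl fun q _ => this q]
  rw [Vpart, Upart, ← Finset.sum_add_distrib, ← Finset.sum_div, ← Finset.sum_neg_distrib]

lemma Upart_rec (n : ℕ) :
    (n : ℚ) * Upart n = ∑ a ∈ Finset.Icc 1 n,
      -(Vpart (n - a) + Upart (n - a)) * (a : ℚ) / (a.factorial : ℚ) := by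
  have h : (n : ℚ) * Upart n = ∑ p : Nat.Partition n,
      ∑ a ∈ p.parts.toFinset, (((p.parts.count a : ℕ) : ℚ) * (a : ℚ)) * wgt p.parts := by
    rw [Upart, Finset.mul_sum]
    refine Finset.sum_congr rfl fun p _ => ?_
    rw [show ((n : ℕ) : ℚ) = ((p.parts.sum : ℕ) : ℚ) by rw [p.parts_sum],
      sum_eq_sum_count, Finset.sum_mul]
  rw [h, key_bij n (fun t a => (((t.count a : ℕ) : ℚ) * (a : ℚ)) * wgt t)]
  refine Finset.sum_congr rfl fun a _ => ?_
  have : ∀ q : Nat.Partition (n - a),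
      ((((a ::ₘ q.parts).count a : ℕ) : ℚ) * (a : ℚ)) * wgt (a ::ₘ q.parts)
        = -((Multiset.card q.parts : ℚ) * wgt q.parts + wgt q.parts) * (a : ℚ)
            / (a.factorial : ℚ) := by
    intro q
    have := count_mul_wgt a q.parts
    have h2 : ((((a ::ₘ q.parts).count a : ℕ) : ℚ) * (a : ℚ)) * wgt (a ::ₘ q.parts)
        = ((((a ::ₘ q.parts).count a : ℕ) : ℚ) * wgt (a ::ₘ q.parts)) * (a : ℚ) := by ring
    rw [h2, this]
    ring
  rw [Finset.sum_congr rfl fun q _ => this q]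
  rw [Vpart, Upart, ← Finset.sum_add_distrib, ← Finset.sum_neg_distrib,
    ← Finset.sum_div, ← Finset.sum_mul]

lemma range_succ_eq_insert (n : ℕ) : Finset.range (n + 1) = insert 0 (Finset.Icc 1 n) := by
  ext a
  simp only [Finset.mem_range, Finset.mem_insert, Finset.mem_Icc]
  omega

lemma binom1 (n : ℕ) :
    ∑ a ∈ Finset.range (n + 1), ((n.choose a : ℕ) : ℚ) * (-2) ^ (n - a) = (-1) ^ n := by
  have h := add_pow (1 : ℚ) (-2) n
  norm_num at h
  rw [h]
  exact Finset.sum_congr rfl fun a _ => by ring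

lemma binom1' (n : ℕ) :
    ∑ a ∈ Finset.Icc 1 n, ((n.choose a : ℕ) : ℚ) * (-2) ^ (n - a)
      = (-1) ^ n - (-2) ^ n := by
  have h := binom1 n
  rw [range_succ_eq_insert, Finset.sum_insert (by simp)] at h
  simp only [Nat.choose_zero_right, Nat.cast_one, one_mul, Nat.sub_zero] at h
  linarith

lemma binom2 (m : ℕ) :
    ∑ a ∈ Finset.Icc 1 (m + 1), (a : ℚ) * (((m + 1).choose a : ℕ) : ℚ) * (-2) ^ (m + 1 - a)
      = ((m : ℚ) + 1) * (-1) ^ m := by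
  have h0 : ∑ a ∈ Finset.range (m + 2), (a : ℚ) * (((m + 1).choose a : ℕ) : ℚ) * (-2) ^ (m + 1 - a)
      = ∑ a ∈ Finset.Icc 1 (m + 1), (a : ℚ) * (((m + 1).choose a : ℕ) : ℚ) * (-2) ^ (m + 1 - a) := by
    rw [range_succ_eq_insert, Finset.sum_insert (by simp)]
    norm_num
  rw [← h0, Finset.sum_range_succ']
  push_cast
  have h1 : ∀ b ∈ Finset.range (m + 1),
      ((b : ℚ) + 1) * (((m + 1).choose (b + 1) : ℕ) : ℚ) * (-2) ^ (m - b)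
        = ((m : ℚ) + 1) * (((m.choose b : ℕ) : ℚ) * (-2) ^ (m - b)) := by
    intro b _
    have h2 : ((m + 1) * m.choose b : ℕ) = ((m + 1).choose (b + 1) * (b + 1) : ℕ) :=
      Nat.add_one_mul_choose_eq m b
    have h3 : ((m : ℚ) + 1) * ((m.choose b : ℕ) : ℚ)
        = (((m + 1).choose (b + 1) : ℕ) : ℚ) * ((b : ℚ) + 1) := by
      exact_mod_cast congrArg (Nat.cast : ℕ → ℚ) h2
    calc ((b : ℚ) + 1) * (((m + 1).choose (b + 1) : ℕ) : ℚ) * (-2) ^ (m - b)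
        = ((((m + 1).choose (b + 1) : ℕ) : ℚ) * ((b : ℚ) + 1)) * (-2) ^ (m - b) := by ring
      _ = (((m : ℚ) + 1) * ((m.choose b : ℕ) : ℚ)) * (-2) ^ (m - b) := by rw [← h3]
      _ = ((m : ℚ) + 1) * (((m.choose b : ℕ) : ℚ) * (-2) ^ (m - b)) := by ring
  calc (∑ b ∈ Finset.range (m + 1),
        ((b : ℚ) + 1) * (((m + 1).choose (b + 1) : ℕ) : ℚ) * (-2) ^ (m - b))
        + (0 : ℚ) * (((m + 1).choose 0 : ℕ) : ℚ) * (-2) ^ (m + 1)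
      = ∑ b ∈ Finset.range (m + 1),
          ((m : ℚ) + 1) * (((m.choose b : ℕ) : ℚ) * (-2) ^ (m - b)) := by
        rw [Finset.sum_congr rfl h1, zero_mul, zero_mul, add_zero]
    _ = ((m : ℚ) + 1) * ∑ b ∈ Finset.range (m + 1), ((m.choose b : ℕ) : ℚ) * (-2) ^ (m - b) := by
        rw [Finset.mul_sum]
    _ = ((m : ℚ) + 1) * (-1) ^ m := by rw [binom1]

theorem UV_closed (n : ℕ) :
    Upart n = (-1) ^ n / (n.factorial : ℚ) ∧
      Vpart n = ((-2) ^ n - (-1) ^ n) / (n.factorial : ℚ) := by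
  induction n using Nat.strong_induction_on with
  | _ n ih =>
    match n with
    | 0 => exact ⟨by simp [Upart_zero], by simp [Vpart_zero]⟩
    | (m + 1) =>
      have hVU : ∀ a ∈ Finset.Icc 1 (m + 1),
          Vpart (m + 1 - a) + Upart (m + 1 - a)
            = (-2) ^ (m + 1 - a) / (((m + 1 - a).factorial : ℕ) : ℚ) := by
        intro a ha
        rw [Finset.mem_Icc] at ha
        obtain ⟨h1, h2⟩ := ha
        obtain ⟨hU, hV⟩ := ih (m + 1 - a) (by omega)
        rw [hU, hV, ← add_div]
        ring_nf
      have hV : Vpart (m + 1) = ((-2) ^ (m + 1) - (-1) ^ (m + 1)) / (((m + 1).factorial : ℕ) : ℚ) := by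
        rw [Vpart_rec]
        have step : ∀ a ∈ Finset.Icc 1 (m + 1),
            -(Vpart (m + 1 - a) + Upart (m + 1 - a)) / ((a.factorial : ℕ) : ℚ)
              = (((m + 1).choose a : ℕ) : ℚ) * (-2) ^ (m + 1 - a)
                  * (-(1 : ℚ) / (((m + 1).factorial : ℕ) : ℚ)) := by
          intro a ha
          have h2 := (Finset.mem_Icc.1 ha).2
          rw [hVU a ha, Nat.cast_choose ℚ h2]
          have e1 := fac_cast_ne_zero a
          have e2 := fac_cast_ne_zero (m + 1 - a)
          have e3 := fac_cast_ne_zero (m + 1)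
          field_simp
          try ring
        rw [Finset.sum_congr rfl step, ← Finset.sum_mul, binom1']
        have e3 := fac_cast_ne_zero (m + 1)
        field_simp
        try ring
      refine ⟨?_, hV⟩
      have hU : ((m + 1 : ℕ) : ℚ) * Upart (m + 1)
          = ((m + 1 : ℕ) : ℚ) * ((-1) ^ (m + 1) / (((m + 1).factorial : ℕ) : ℚ)) := by
        rw [Upart_rec]
        have step : ∀ a ∈ Finset.Icc 1 (m + 1),
            -(Vpart (m + 1 - a) + Upart (m + 1 - a)) * (a : ℚ) / ((a.factorial : ℕ) : ℚ)
              = ((a : ℚ) * (((m + 1).choose a : ℕ) : ℚ) * (-2) ^ (m + 1 - a))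
                  * (-(1 : ℚ) / (((m + 1).factorial : ℕ) : ℚ)) := by
          intro a ha
          have h2 := (Finset.mem_Icc.1 ha).2
          rw [hVU a ha, Nat.cast_choose ℚ h2]
          have e1 := fac_cast_ne_zero a
          have e2 := fac_cast_ne_zero (m + 1 - a)
          have e3 := fac_cast_ne_zero (m + 1)
          field_simp
          try ring
        rw [Finset.sum_congr rfl step, ← Finset.sum_mul, binom2]
        have e3 := fac_cast_ne_zero (m + 1)
        field_simp
        push_cast
        ring
      have hne : ((m + 1 : ℕ) : ℚ) ≠ 0 := by positivity
      exact mul_left_cancel₀ hne hU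
noncomputable def Dm (J : ℕ) (t : Multiset ℕ) : ℚ :=
  (-1) ^ (Multiset.card t - 1) * (J.factorial : ℚ) /
      (((t.map Nat.factorial).prod : ℕ) * (Multiset.card t : ℚ)) *
    (((Multiset.card t).factorial : ℚ) / ∏ i ∈ t.toFinset, ((t.count i).factorial : ℚ))

lemma Dpi_eq_Dm (J : ℕ) (p : Nat.Partition J) : Dpi J p = Dm J p.parts := by
  unfold Dpi Dm
  congr 1
  congr 1
  refine (Finset.prod_subset ?_ ?_).symm
  · intro i hi
    have := mem_Icc_of_mem_parts p (Multiset.mem_toFinset.1 hi)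
    rw [Finset.mem_Icc] at this
    rw [Finset.mem_range]
    omega
  · intro i _ hi
    rw [Multiset.count_eq_zero_of_notMem (fun h => hi (Multiset.mem_toFinset.2 h))]
    norm_num

lemma count_mul_Dm {J a : ℕ} (ha1 : 1 ≤ a) (ha2 : a ≤ J) (t : Multiset ℕ) :
    (((a ::ₘ t).count a : ℕ) : ℚ) * Dm J (a ::ₘ t)
      = ((J.choose a : ℕ) : ℚ) * (((J - a).factorial : ℕ) : ℚ) * wgt t := by
  unfold Dm
  rw [wgt_def, Nat.cast_choose ℚ ha2]
  have hPt := prod_fac_ne_zero t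
  have hMt := prod_count_fac_ne_zero t
  have hfa := fac_cast_ne_zero a
  have hfJa := fac_cast_ne_zero (J - a)
  have hprodmap : (((a ::ₘ t).map Nat.factorial).prod : ℚ)
      = (a.factorial : ℚ) * ((t.map Nat.factorial).prod : ℕ) := by
    rw [Multiset.map_cons, Multiset.prod_cons]; push_cast; ring
  by_cases ha : a ∈ t
  · have htf : (a ::ₘ t).toFinset = t.toFinset := by
      rw [Multiset.toFinset_cons, Finset.insert_eq_self.2 (Multiset.mem_toFinset.2 ha)]
    have hprod : (∏ i ∈ (a ::ₘ t).toFinset, (((a ::ₘ t).count i).factorial : ℚ))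
        = (t.count a + 1) * ∏ i ∈ t.toFinset, ((t.count i).factorial : ℚ) := by
      rw [htf]
      rw [← Finset.prod_erase_mul _ _ (Multiset.mem_toFinset.2 ha),
          ← Finset.prod_erase_mul _ _ (Multiset.mem_toFinset.2 ha)]
      have h1 : ∀ i ∈ t.toFinset.erase a, (((a ::ₘ t).count i).factorial : ℚ)
          = ((t.count i).factorial : ℚ) := by
        intro i hi
        rw [Multiset.count_cons_of_ne (Finset.ne_of_mem_erase hi)]
      rw [Finset.prod_congr rfl h1, Multiset.count_cons_self, Nat.factorial_succ]
      push_cast; ring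
    have hcount : (((a ::ₘ t).count a : ℕ) : ℚ) = (t.count a : ℚ) + 1 := by
      rw [Multiset.count_cons_self]; push_cast; ring
    rw [hcount, hprod, hprodmap]
    simp only [Multiset.card_cons, Nat.add_sub_cancel]
    have e1 : (((Multiset.card t) + 1).factorial : ℚ)
        = ((Multiset.card t : ℚ) + 1) * ((Multiset.card t).factorial : ℚ) := by
      rw [Nat.factorial_succ]; push_cast; ring
    rw [e1]
    have hca : ((t.count a : ℚ) + 1) ≠ 0 := by positivity
    have hk1 : ((Multiset.card t : ℚ) + 1) ≠ 0 := by positivity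
    set P := (((t.map Nat.factorial).prod : ℕ) : ℚ)
    set M := ∏ i ∈ t.toFinset, ((t.count i).factorial : ℚ)
    set K := ((Multiset.card t).factorial : ℚ)
    set k := ((Multiset.card t : ℕ) : ℚ)
    have hcast : ((Multiset.card t + 1 : ℕ) : ℚ) = k + 1 := by push_cast; rfl
    rw [hcast]
    field_simp
  · have hant : a ∉ t.toFinset := fun h => ha (Multiset.mem_toFinset.1 h)
    have hprod : (∏ i ∈ (a ::ₘ t).toFinset, (((a ::ₘ t).count i).factorial : ℚ))
        = ∏ i ∈ t.toFinset, ((t.count i).factorial : ℚ) := by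
      rw [Multiset.toFinset_cons, Finset.prod_insert hant]
      have h1 : ∀ i ∈ t.toFinset, (((a ::ₘ t).count i).factorial : ℚ)
          = ((t.count i).factorial : ℚ) := by
        intro i hi
        rw [Multiset.count_cons_of_ne]
        intro h; exact hant (h ▸ hi)
      rw [Finset.prod_congr rfl h1, Multiset.count_cons_self,
          Multiset.count_eq_zero_of_notMem ha]
      norm_num
    have hcount : (((a ::ₘ t).count a : ℕ) : ℚ) = 1 := by
      rw [Multiset.count_cons_self, Multiset.count_eq_zero_of_notMem ha]
      norm_num
    rw [hcount, hprod, hprodmap]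
    simp only [Multiset.card_cons, Nat.add_sub_cancel]
    have e1 : (((Multiset.card t) + 1).factorial : ℚ)
        = ((Multiset.card t : ℚ) + 1) * ((Multiset.card t).factorial : ℚ) := by
      rw [Nat.factorial_succ]; push_cast; ring
    rw [e1]
    have hk1 : ((Multiset.card t : ℚ) + 1) ≠ 0 := by positivity
    set P := (((t.map Nat.factorial).prod : ℕ) : ℚ)
    set M := ∏ i ∈ t.toFinset, ((t.count i).factorial : ℚ)
    set K := ((Multiset.card t).factorial : ℚ)
    set k := ((Multiset.card t : ℕ) : ℚ)
    have hcast : ((Multiset.card t + 1 : ℕ) : ℚ) = k + 1 := by push_cast; rfl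
    rw [hcast]
    field_simp

lemma main_reduction (J s : ℕ) :
    ∑ p : Nat.Partition J, Dpi J p * Hpi J p s
      = ∑ a ∈ Finset.Icc 1 J, ((a : ℚ)) ^ s * ((J.choose a : ℕ) : ℚ) * (-1) ^ (J - a) := by
  have h1 : ∀ p : Nat.Partition J, Dpi J p * Hpi J p s
      = ∑ a ∈ p.parts.toFinset,
          (((p.parts.count a : ℕ) : ℚ) * (a : ℚ) ^ s) * Dm J p.parts := by
    intro p
    rw [Dpi_eq_Dm]
    have h2 : Hpi J p s = ∑ a ∈ p.parts.toFinset,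
        ((p.parts.count a : ℕ) : ℚ) * (a : ℚ) ^ s := by
      unfold Hpi
      rw [Finset.sum_multiset_map_count]
      push_cast [smul_eq_mul]
      rfl
    rw [h2, Finset.mul_sum]
    exact Finset.sum_congr rfl fun a _ => by ring
  rw [Finset.sum_congr rfl fun p _ => h1 p,
    key_bij J (fun t a => (((t.count a : ℕ) : ℚ) * (a : ℚ) ^ s) * Dm J t)]
  refine Finset.sum_congr rfl fun a ha => ?_
  rw [Finset.mem_Icc] at ha
  have h3 : ∀ q : Nat.Partition (J - a),
      ((((a ::ₘ q.parts).count a : ℕ) : ℚ) * (a : ℚ) ^ s) * Dm J (a ::ₘ q.parts)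
        = (a : ℚ) ^ s * (((J.choose a : ℕ) : ℚ) * (((J - a).factorial : ℕ) : ℚ))
            * wgt q.parts := by
    intro q
    have := count_mul_Dm ha.1 ha.2 q.parts
    calc ((((a ::ₘ q.parts).count a : ℕ) : ℚ) * (a : ℚ) ^ s) * Dm J (a ::ₘ q.parts)
        = (a : ℚ) ^ s * ((((a ::ₘ q.parts).count a : ℕ) : ℚ) * Dm J (a ::ₘ q.parts)) := by ring
      _ = _ := by rw [this]; ring
  rw [Finset.sum_congr rfl fun q _ => h3 q, ← Finset.mul_sum, ← Upart, (UV_closed (J - a)).1]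
  have := fac_cast_ne_zero (J - a)
  field_simp
lemma nat_id (K a : ℕ) :
    (K + 1) * (K + 1).choose a = (K + 1) * K.choose a + a * (K + 1).choose a := by
  cases a with
  | zero => simp
  | succ b =>
    have h1 := Nat.add_one_mul_choose_eq K b
    have h2 : (K + 1).choose (b + 1) = K.choose b + K.choose (b + 1) :=
      Nat.choose_succ_succ K b
    calc (K + 1) * (K + 1).choose (b + 1)
        = (K + 1) * K.choose b + (K + 1) * K.choose (b + 1) := by rw [h2]; ring
      _ = (K + 1) * K.choose (b + 1) + (b + 1) * (K + 1).choose (b + 1) := by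
          rw [show (K+1) * K.choose b = (K+1).choose (b+1) * (b+1) from h1]; ring

lemma alt_sum_pow (J : ℕ) :
    ∑ a ∈ Finset.range (J + 1), (-1 : ℚ) ^ (J - a) * ((J.choose a : ℕ) : ℚ)
      = if J = 0 then 1 else 0 := by
  have h := add_pow (1 : ℚ) (-1) J
  norm_num at h
  rw [← h, zero_pow_eq]

lemma stirling_sum (s : ℕ) : ∀ J : ℕ,
    ∑ a ∈ Finset.range (J + 1), (-1 : ℚ) ^ (J - a) * ((J.choose a : ℕ) : ℚ) * (a : ℚ) ^ s
      = ((J.factorial : ℕ) : ℚ) * (stirling2 s J : ℕ) := by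
  induction s with
  | zero =>
    intro J
    have h : ∀ a ∈ Finset.range (J + 1),
        (-1 : ℚ) ^ (J - a) * ((J.choose a : ℕ) : ℚ) * (a : ℚ) ^ 0
          = (-1 : ℚ) ^ (J - a) * ((J.choose a : ℕ) : ℚ) := by
      intro a _; ring
    rw [Finset.sum_congr rfl h, alt_sum_pow]
    cases J with
    | zero => simp [stirling2]
    | succ K => simp [stirling2]
  | succ s ih =>
    intro J
    cases J with
    | zero => simp [stirling2]
    | succ K =>
      have step : ∀ a ∈ Finset.range (K + 2),
          (-1 : ℚ) ^ (K + 1 - a) * (((K + 1).choose a : ℕ) : ℚ) * (a : ℚ) ^ (s + 1)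
            = ((K : ℚ) + 1) *
                ((-1 : ℚ) ^ (K + 1 - a) * (((K + 1).choose a : ℕ) : ℚ) * (a : ℚ) ^ s)
              - ((K : ℚ) + 1) *
                ((-1 : ℚ) ^ (K + 1 - a) * ((K.choose a : ℕ) : ℚ) * (a : ℚ) ^ s) := by
        intro a _
        have h1 : ((K : ℚ) + 1) * (a : ℚ) * (((K + 1).choose a : ℕ) : ℚ)
            = ((K : ℚ) + 1) * (((K + 1).choose a : ℕ) : ℚ) * ((K : ℚ) + 1)
              - ((K : ℚ) + 1) * (((K.choose a : ℕ) : ℚ)) * ((K : ℚ) + 1)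
              + 0 := by
          have h2 := nat_id K a
          have h3 : ((K : ℚ) + 1) * (((K + 1).choose a : ℕ) : ℚ)
              = ((K : ℚ) + 1) * ((K.choose a : ℕ) : ℚ)
                + (a : ℚ) * (((K + 1).choose a : ℕ) : ℚ) := by exact_mod_cast h2
          nlinarith [h3]
        have h4 : (a : ℚ) * (((K + 1).choose a : ℕ) : ℚ)
            = ((K : ℚ) + 1) * (((K + 1).choose a : ℕ) : ℚ)
              - ((K : ℚ) + 1) * ((K.choose a : ℕ) : ℚ) := by
          have h2 := nat_id K a
          have h3 : ((K : ℚ) + 1) * (((K + 1).choose a : ℕ) : ℚ)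
              = ((K : ℚ) + 1) * ((K.choose a : ℕ) : ℚ)
                + (a : ℚ) * (((K + 1).choose a : ℕ) : ℚ) := by exact_mod_cast h2
          linarith
        calc (-1 : ℚ) ^ (K + 1 - a) * (((K + 1).choose a : ℕ) : ℚ) * (a : ℚ) ^ (s + 1)
            = (-1 : ℚ) ^ (K + 1 - a) * (a : ℚ) ^ s
                * ((a : ℚ) * (((K + 1).choose a : ℕ) : ℚ)) := by ring
          _ = (-1 : ℚ) ^ (K + 1 - a) * (a : ℚ) ^ s
                * (((K : ℚ) + 1) * (((K + 1).choose a : ℕ) : ℚ)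
                    - ((K : ℚ) + 1) * ((K.choose a : ℕ) : ℚ)) := by rw [h4]
          _ = _ := by ring
      rw [Finset.sum_congr rfl step, Finset.sum_sub_distrib, ← Finset.mul_sum, ← Finset.mul_sum]
      rw [ih (K + 1)]
      have hsecond : ∑ a ∈ Finset.range (K + 2),
          (-1 : ℚ) ^ (K + 1 - a) * ((K.choose a : ℕ) : ℚ) * (a : ℚ) ^ s
            = -(((K.factorial : ℕ) : ℚ) * (stirling2 s K : ℕ)) := by
        rw [Finset.sum_range_succ]
        rw [Nat.choose_eq_zero_of_lt (by omega)]
        norm_num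
        have h5 : ∀ a ∈ Finset.range (K + 1),
            (-1 : ℚ) ^ (K + 1 - a) * ((K.choose a : ℕ) : ℚ) * (a : ℚ) ^ s
              = -((-1 : ℚ) ^ (K - a) * ((K.choose a : ℕ) : ℚ) * (a : ℚ) ^ s) := by
          intro a ha
          rw [Finset.mem_range] at ha
          rw [show K + 1 - a = (K - a) + 1 by omega, pow_succ]
          ring
        rw [Finset.sum_congr rfl h5, Finset.sum_neg_distrib, ih K]
      rw [hsecond]
      have hst : (stirling2 (s + 1) (K + 1) : ℚ)
          = (K + 1 : ℚ) * (stirling2 s (K + 1) : ℕ) + (stirling2 s K : ℕ) := by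
        rw [show stirling2 (s + 1) (K + 1) = (K + 1) * stirling2 s (K + 1) + stirling2 s K
          from rfl]
        push_cast
        ring
      have hfac : (((K + 1).factorial : ℕ) : ℚ) = ((K : ℚ) + 1) * ((K.factorial : ℕ) : ℚ) := by
        rw [Nat.factorial_succ]; push_cast; ring
      rw [hst, hfac]
      push_cast
      ring

lemma stirling2_eq_zero {s J : ℕ} (h : s < J) : stirling2 s J = 0 := by
  induction s generalizing J with
  | zero =>
    match J, h with
    | (K + 1), _ => rfl
  | succ s ih =>
    match J, h with
    | (K + 1), h =>
      show (K + 1) * stirling2 s (K + 1) + stirling2 s K = 0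
      rw [ih (by omega), ih (by omega)]
      ring

theorem sum_Dpi_Hpi_eq_stirling (J s : ℕ) (hJ : 1 ≤ J) (hs : 1 ≤ s) :
    (∑ p : Nat.Partition J, Dpi J p * Hpi J p s = (J.factorial : ℚ) * stirling2 s J) ∧
      (s < J → ∑ p : Nat.Partition J, Dpi J p * Hpi J p s = 0) := by
  have h1 : ∑ p : Nat.Partition J, Dpi J p * Hpi J p s
      = (J.factorial : ℚ) * stirling2 s J := by
    rw [main_reduction J s, ← stirling_sum s J, range_succ_eq_insert J,
      Finset.sum_insert (by simp)]
    rw [show ((0 : ℕ) : ℚ) ^ s = 0 from by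
      rw [Nat.cast_zero]; exact zero_pow (by omega)]
    rw [mul_zero, zero_add]
    exact Finset.sum_congr rfl fun a _ => by ring
  refine ⟨h1, fun hlt => ?_⟩
  rw [h1, stirling2_eq_zero hlt]
  norm_num
end

section
/- For the random equiprobable distribution of n indistinguishable balls into N distinguishable boxes, the number S_n^(r) of boxes containing exactly r balls has i-th factorial moment E[(S_n^(r))_i] = (N)_i (N−1)_i (n)_{ir} / (n+N−1)_{i(r+1)} for all i with i(r+1) ≤ n+N−1. -/
open Finset


lemma adt_succ_rec (k m : ℕ) : List.Nat.antidiagonalTuple (k+1) m =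
    (List.Nat.antidiagonal m).flatMap fun ni =>
      (List.Nat.antidiagonalTuple k ni.2).map fun x => Fin.cons ni.1 x := by
  rw [List.Nat.antidiagonalTuple]

lemma len_adt_succ : ∀ k m : ℕ, (List.Nat.antidiagonalTuple (k+1) m).length = (m + k).choose m := by
  intro k
  induction k with
  | zero => intro m; rw [List.Nat.antidiagonalTuple_one]; simp
  | succ k ih =>
    intro m
    rw [adt_succ_rec, List.length_flatMap]
    have h0 : List.Nat.antidiagonal m = (List.range (m+1)).map fun i => (i, m - i) := rfl
    rw [h0, List.map_map]
    simp only [Function.comp_def, List.length_map, ih]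
    have h1 : ((List.range (m+1)).map fun i => ((m - i) + k).choose (m - i)).sum
        = ∑ i ∈ Finset.range (m+1), ((m - i) + k).choose (m - i) := rfl
    have h2 := Finset.sum_range_reflect (fun j => (j + k).choose j) (m+1)
    simp only [Nat.add_sub_cancel] at h2
    rw [h1, h2]
    have h3 : ∀ j ∈ Finset.range (m+1), (j + k).choose j = (j + k).choose k := by
      intro j hj
      exact Nat.choose_symm_of_eq_add rfl
    rw [Finset.sum_congr rfl h3, Nat.sum_range_add_choose m k]
    exact Nat.choose_symm_of_eq_add (by omega)

lemma card_adt (k m : ℕ) :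
    (Finset.Nat.antidiagonalTuple k m).card = (m + k - 1).choose m := by
  cases k with
  | zero =>
    cases m with
    | zero => simp
    | succ m =>
      rw [Finset.Nat.antidiagonalTuple_zero_succ]
      simp [Nat.choose_eq_zero_of_lt]
  | succ k =>
    have h : (Finset.Nat.antidiagonalTuple (k+1) m).card
        = (List.Nat.antidiagonalTuple (k+1) m).length := rfl
    rw [h, len_adt_succ]
    congr 1

open Finset

lemma count_fixed (n N r i : ℕ) (t : Finset (Fin N)) (ht : t.card = i) (hir : i * r ≤ n) :
    ((Finset.Nat.antidiagonalTuple N n).filter (fun f => ∀ j ∈ t, f j = r)).card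
      = (Finset.Nat.antidiagonalTuple (N - i) (n - i * r)).card := by
  have hcompl : (tᶜ : Finset (Fin N)).card = N - i := by
    rw [Finset.card_compl, ht, Fintype.card_fin]
  let E : ↥(tᶜ : Finset (Fin N)) ≃ Fin (N - i) := (tᶜ).equivFin.trans (finCongr hcompl)
  apply Finset.card_bij' (fun f _ => fun k => f ((E.symm k) : Fin N))
    (fun g _ => fun j => if h : j ∈ tᶜ then g (E ⟨j, h⟩) else r)
  · -- forward membership
    intro f hf
    rw [Finset.mem_filter, Finset.Nat.mem_antidiagonalTuple] at hf
    obtain ⟨hsum, hval⟩ := hf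
    rw [Finset.Nat.mem_antidiagonalTuple]
    have h1 : ∑ k : Fin (N - i), f ((E.symm k) : Fin N) = ∑ x : ↥(tᶜ : Finset (Fin N)), f x :=
      Equiv.sum_comp E.symm (fun x => f (x : Fin N))
    have h2 : ∑ x : ↥(tᶜ : Finset (Fin N)), f x = ∑ j ∈ tᶜ, f j := Finset.sum_coe_sort _ _
    have h3 : ∑ j ∈ t, f j = i * r := by
      rw [Finset.sum_congr rfl hval, Finset.sum_const, ht, smul_eq_mul]
    have h4 : ∑ j ∈ t, f j + ∑ j ∈ tᶜ, f j = n := by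
      rw [Finset.sum_add_sum_compl]
      exact hsum
    rw [h1, h2]; omega
  · -- backward membership
    intro g hg
    rw [Finset.Nat.mem_antidiagonalTuple] at hg
    rw [Finset.mem_filter, Finset.Nat.mem_antidiagonalTuple]
    constructor
    · have h1 : ∑ j ∈ t, (if h : j ∈ tᶜ then g (E ⟨j, h⟩) else r) = i * r := by
        rw [Finset.sum_congr rfl (fun j hj => by
          rw [dif_neg (by simp [Finset.mem_compl, hj])]), Finset.sum_const, ht, smul_eq_mul]
      have h2 : ∑ j ∈ tᶜ, (if h : j ∈ tᶜ then g (E ⟨j, h⟩) else r)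
          = ∑ x : ↥(tᶜ : Finset (Fin N)), g (E x) := by
        rw [← Finset.sum_coe_sort]
        exact Finset.sum_congr rfl (fun x _ => by rw [dif_pos x.2])
      have h3 : ∑ x : ↥(tᶜ : Finset (Fin N)), g (E x) = ∑ k, g k := Equiv.sum_comp E g
      have h4 := Finset.sum_add_sum_compl t (fun j => if h : j ∈ tᶜ then g (E ⟨j, h⟩) else r)
      rw [h1] at h4
      rw [h2, h3, hg] at h4
      omega
    · intro j hj
      beta_reduce
      rw [dif_neg (by simp [Finset.mem_compl, hj])]
  · -- left inverse
    intro f hf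
    rw [Finset.mem_filter] at hf
    funext j
    beta_reduce
    by_cases h : j ∈ tᶜ
    · rw [dif_pos h]
      show f ((E.symm (E ⟨j, h⟩)) : Fin N) = f j
      rw [E.symm_apply_apply]
    · rw [dif_neg h]
      exact (hf.2 j (by simpa [Finset.mem_compl] using h)).symm
  · -- right inverse
    intro g hg
    funext k
    beta_reduce
    rw [dif_pos (E.symm k).2]
    rw [Subtype.coe_eta, E.apply_symm_apply]


lemma swap_sum (n N r i : ℕ) :
    ∑ f ∈ Finset.Nat.antidiagonalTuple N n,
        ((Finset.univ.filter fun j : Fin N => f j = r).card.choose i)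
      = ∑ t ∈ Finset.powersetCard i (Finset.univ : Finset (Fin N)),
          ((Finset.Nat.antidiagonalTuple N n).filter (fun f => ∀ j ∈ t, f j = r)).card := by
  have h1 : ∀ f : Fin N → ℕ, (Finset.univ.filter fun j => f j = r).card.choose i
      = ((Finset.powersetCard i Finset.univ).filter (fun t => ∀ j ∈ t, f j = r)).card := by
    intro f
    rw [← Finset.card_powersetCard]
    congr 1
    ext t
    simp only [Finset.mem_powersetCard, Finset.mem_filter, Finset.subset_iff,
      Finset.mem_filter, Finset.mem_univ, true_and]
    tauto
  rw [Finset.sum_congr rfl fun f _ => h1 f]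
  simp_rw [Finset.card_filter]
  exact Finset.sum_comm








theorem indistinguishable_balls_factorial_moment (n N r i : ℕ) (hN : 0 < N)
    (hi : i * (r + 1) ≤ n + N - 1) :
    (∑ f ∈ Finset.Nat.antidiagonalTuple N n,
        (((Finset.univ.filter fun j : Fin N => f j = r).card.descFactorial i : ℚ))) /
        ((n + N - 1).choose n : ℚ) =
      ((N.descFactorial i : ℚ) * ((N - 1).descFactorial i) * (n.descFactorial (i * r))) /
        ((n + N - 1).descFactorial (i * (r + 1))) := by
  classical
  rw [show (∑ f ∈ Finset.Nat.antidiagonalTuple N n,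
      (((Finset.univ.filter fun j : Fin N => f j = r).card.descFactorial i : ℚ)))
      = ((∑ f ∈ Finset.Nat.antidiagonalTuple N n,
        (Finset.univ.filter fun j : Fin N => f j = r).card.descFactorial i : ℕ) : ℚ) by
    push_cast; rfl]
  by_cases hNi : N < i
  · have hz : ∀ f ∈ Finset.Nat.antidiagonalTuple N n,
        (Finset.univ.filter fun j : Fin N => f j = r).card.descFactorial i = 0 := by
      intro f _
      refine Nat.descFactorial_eq_zero_iff_lt.mpr (lt_of_le_of_lt ?_ hNi)
      calc (Finset.univ.filter fun j : Fin N => f j = r).card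
          ≤ (Finset.univ : Finset (Fin N)).card := Finset.card_filter_le _ _
        _ = N := by rw [Finset.card_univ, Fintype.card_fin]
    rw [Finset.sum_eq_zero hz, Nat.descFactorial_eq_zero_iff_lt.mpr hNi]
    simp
  by_cases hrn : n < i * r
  · have hz : ∀ f ∈ Finset.Nat.antidiagonalTuple N n,
        (Finset.univ.filter fun j : Fin N => f j = r).card.descFactorial i = 0 := by
      intro f hf
      rw [Finset.Nat.mem_antidiagonalTuple] at hf
      refine Nat.descFactorial_eq_zero_iff_lt.mpr ?_
      have hle : (Finset.univ.filter fun j : Fin N => f j = r).card * r ≤ n := by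
        calc (Finset.univ.filter fun j : Fin N => f j = r).card * r
            = ∑ j ∈ Finset.univ.filter fun j : Fin N => f j = r, r := by
              rw [Finset.sum_const, smul_eq_mul]
          _ = ∑ j ∈ Finset.univ.filter fun j : Fin N => f j = r, f j :=
              Finset.sum_congr rfl (fun j hj => ((Finset.mem_filter.mp hj).2).symm)
          _ ≤ ∑ j, f j := Finset.sum_le_sum_of_subset (Finset.filter_subset _ _)
          _ = n := hf
      by_contra hcon
      push_neg at hcon
      have : i * r ≤ (Finset.univ.filter fun j : Fin N => f j = r).card * r :=
        Nat.mul_le_mul_right r hcon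
      omega
    rw [Finset.sum_eq_zero hz, Nat.descFactorial_eq_zero_iff_lt.mpr hrn]
    simp
  push_neg at hNi hrn
  -- main computation of the sum
  set C : ℕ := (n - i * r + (N - i) - 1).choose (n - i * r) with hC
  have hsum_eq : (∑ f ∈ Finset.Nat.antidiagonalTuple N n,
      (Finset.univ.filter fun j : Fin N => f j = r).card.descFactorial i)
      = N.descFactorial i * C := by
    have h1 : ∀ f : Fin N → ℕ,
        (Finset.univ.filter fun j : Fin N => f j = r).card.descFactorial i
        = Nat.factorial i * (Finset.univ.filter fun j : Fin N => f j = r).card.choose i := by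
      intro f; exact Nat.descFactorial_eq_factorial_mul_choose _ _
    rw [Finset.sum_congr rfl fun f _ => h1 f, ← Finset.mul_sum, swap_sum]
    have h2 : ∀ t ∈ Finset.powersetCard i (Finset.univ : Finset (Fin N)),
        ((Finset.Nat.antidiagonalTuple N n).filter (fun f => ∀ j ∈ t, f j = r)).card = C := by
      intro t ht
      rw [Finset.mem_powersetCard] at ht
      rw [count_fixed n N r i t ht.2 hrn, card_adt]
    rw [Finset.sum_congr rfl h2, Finset.sum_const, smul_eq_mul, Finset.card_powersetCard,
      Finset.card_univ, Fintype.card_fin, ← Nat.mul_assoc,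
      ← Nat.descFactorial_eq_factorial_mul_choose]
  rw [hsum_eq]
  clear hsum_eq
  -- rational algebra
  rcases eq_or_lt_of_le hNi with hiN | hiN
  · -- i = N
    have hh : i * (r + 1) = i * r + i := by ring
    have h1 : 1 ≤ n - i * r := by omega
    have hC0 : C = 0 := by
      rw [hC, Nat.choose_eq_zero_of_lt (by omega)]
    rw [hC0, Nat.mul_zero, Nat.descFactorial_eq_zero_iff_lt.mpr (show N - 1 < i by omega)]
    simp
  · -- i < N
    have hh : i * (r + 1) = i * r + i := by ring
    set a := n - i * r with ha
    set b1 := N - i - 1 with hb1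
    have hCval : C = (a + b1).choose a := by rw [hC]; congr 1; omega
    have hk1 : (a + b1).choose a * Nat.factorial a * Nat.factorial b1
        = Nat.factorial (a + b1) := by
      have h := Nat.choose_mul_factorial_mul_factorial (Nat.le_add_right a b1)
      rwa [Nat.add_sub_cancel_left] at h
    have hk2 : Nat.factorial (a + b1) * (n + N - 1).descFactorial (i * (r + 1))
        = Nat.factorial (n + N - 1) := by
      have h := Nat.factorial_mul_descFactorial hi
      rwa [show n + N - 1 - i * (r + 1) = a + b1 by omega] at h
    have hk3 : Nat.factorial b1 * (N - 1).descFactorial i = Nat.factorial (N - 1) := by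
      have h := Nat.factorial_mul_descFactorial (show i ≤ N - 1 by omega)
      rwa [show N - 1 - i = b1 by omega] at h
    have hk4 : Nat.factorial a * n.descFactorial (i * r) = Nat.factorial n := by
      have h := Nat.factorial_mul_descFactorial hrn
      rwa [show n - i * r = a from rfl] at h
    have hk5 : (n + N - 1).choose n * Nat.factorial n * Nat.factorial (N - 1)
        = Nat.factorial (n + N - 1) := by
      have h := Nat.choose_mul_factorial_mul_factorial (show n ≤ n + N - 1 by omega)
      rwa [show n + N - 1 - n = N - 1 by omega] at h
    have hD : (((n + N - 1).choose n : ℕ) : ℚ) ≠ 0 :=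
      Nat.cast_ne_zero.mpr (Nat.choose_pos (by omega)).ne'
    have hE : (((n + N - 1).descFactorial (i * (r + 1)) : ℕ) : ℚ) ≠ 0 :=
      Nat.cast_ne_zero.mpr (fun h0 =>
        absurd (Nat.descFactorial_eq_zero_iff_lt.mp h0) (by omega))
    rw [hCval, div_eq_div_iff hD hE]
    have e1 := congrArg (fun x : ℕ => (x : ℚ)) hk1
    have e2 := congrArg (fun x : ℕ => (x : ℚ)) hk2
    have e3 := congrArg (fun x : ℕ => (x : ℚ)) hk3
    have e4 := congrArg (fun x : ℕ => (x : ℚ)) hk4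
    have e5 := congrArg (fun x : ℕ => (x : ℚ)) hk5
    push_cast at e1 e2 e3 e4 e5
    have hfne : ∀ m : ℕ, ((Nat.factorial m : ℕ) : ℚ) ≠ 0 :=
      fun m => Nat.cast_ne_zero.mpr (Nat.factorial_ne_zero m)
    apply mul_right_cancel₀ (show ((Nat.factorial a : ℚ) * Nat.factorial b1
      * Nat.factorial n * Nat.factorial (N - 1)) ≠ 0 from
      mul_ne_zero (mul_ne_zero (mul_ne_zero (hfne a) (hfne b1)) (hfne n)) (hfne (N - 1)))
    push_cast
    linear_combination
      ((N.descFactorial i : ℚ) * Nat.factorial n * Nat.factorial (N - 1)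
        * ((n + N - 1).descFactorial (i * (r + 1)) : ℚ)) * e1
      + ((N.descFactorial i : ℚ) * Nat.factorial n * Nat.factorial (N - 1)) * e2
      - ((N.descFactorial i : ℚ) * (n.descFactorial (i * r) : ℚ)
        * ((n + N - 1).choose n : ℚ) * Nat.factorial a * Nat.factorial n
        * Nat.factorial (N - 1)) * e3
      - ((N.descFactorial i : ℚ) * ((n + N - 1).choose n : ℚ) * Nat.factorial n
        * Nat.factorial (N - 1) * Nat.factorial (N - 1)) * e4
      - ((N.descFactorial i : ℚ) * Nat.factorial n * Nat.factorial (N - 1)) * e5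
end

section
/- In the colored balls model, where from an urn of NM balls containing M balls of each of N colors a simple random sample of n ≤ NM balls is drawn and ξ_j is the number of balls of color j, the number S_n^(r) of colors with exactly r balls in the sample has i-th factorial moment E[(S_n^(r))_i] = (N)_i · C(M,r)^i · C((N−i)M, n−ri) / C(NM, n). -/
open Finset

open Nat

lemma count_core (N M r : ℕ) (A : Finset (Fin N)) :
    ∀ (B : Finset (Fin N)) (n : ℕ), A ⊆ B → r * A.card ≤ n →
    (((B ×ˢ (univ : Finset (Fin M))).powersetCard n).filter
        (fun T => ∀ j ∈ A, (T.filter fun x => x.1 = j).card = r)).card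
      = (M.choose r) ^ A.card * ((B.card - A.card) * M).choose (n - r * A.card) := by
  induction A using Finset.induction_on with
  | empty =>
      intro B n _ _
      simp [Finset.filter_true_of_mem, Finset.card_powersetCard, Finset.card_product]
  | insert _ _ ha =>
      rename_i a s ih
      intro B n hAB hn
      have haB : a ∈ B := hAB (mem_insert_self a s)
      have hsB : s ⊆ B.erase a := fun j hj =>
        Finset.mem_erase.2 ⟨fun h => ha (h ▸ hj), hAB (mem_insert_of_mem hj)⟩
      rw [Finset.card_insert_of_notMem ha] at hn ⊢
      have hn2 : r * s.card + r ≤ n := by rw [Nat.mul_add, Nat.mul_one] at hn; omega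
      have hrn : r ≤ n := by omega
      have hsn : r * s.card ≤ n - r := by omega
      -- target finset
      have key : (((B ×ˢ (univ : Finset (Fin M))).powersetCard n).filter
          (fun T => ∀ j ∈ insert a s, (T.filter fun x => x.1 = j).card = r)).card
        = ((({a} ×ˢ (univ : Finset (Fin M))).powersetCard r) ×ˢ
            ((((B.erase a) ×ˢ (univ : Finset (Fin M))).powersetCard (n - r)).filter
              (fun V => ∀ j ∈ s, (V.filter fun x => x.1 = j).card = r))).card := by
        apply Finset.card_nbij' (fun T => (T.filter (fun x => x.1 = a), T.filter (fun x => ¬ x.1 = a)))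
          (fun p => p.1 ∪ p.2)
        · intro T hT
          simp only [Finset.mem_coe, mem_filter, Finset.mem_powersetCard] at hT
          obtain ⟨⟨hTsub, hTcard⟩, hP⟩ := hT
          have hfa : (T.filter fun x => x.1 = a).card = r := hP a (mem_insert_self a s)
          simp only [Finset.mem_coe, Finset.mem_product, Finset.mem_powersetCard, mem_filter]
          refine ⟨⟨fun x hx => ?_, hfa⟩, ⟨fun x hx => ?_, ?_⟩, fun j hj => ?_⟩
          · simp only [mem_filter] at hx
            simp only [Finset.mem_product, Finset.mem_singleton, Finset.mem_univ, and_true]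
            exact hx.2
          · simp only [mem_filter] at hx
            have := hTsub hx.1
            simp only [Finset.mem_product] at this
            simp [Finset.mem_product, Finset.mem_erase, hx.2, this.1]
          · have := Finset.card_filter_add_card_filter_not (s := T) (p := fun x => x.1 = a)
            omega
          · have hne : ∀ x : Fin N × Fin M, x.1 = j → ¬ x.1 = a := by
              intro x hx hxa
              exact ha ((hxa ▸ hx ▸ rfl : a = j) ▸ hj)
            rw [Finset.filter_filter]
            have : (T.filter fun x => ¬ x.1 = a ∧ x.1 = j) = T.filter fun x => x.1 = j := by
              apply Finset.filter_congr
              intro x _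
              constructor
              · exact fun h => h.2
              · exact fun h => ⟨hne x h, h⟩
            rw [this]
            exact hP j (mem_insert_of_mem hj)
        · intro p hp
          simp only [Finset.mem_coe, Finset.mem_product, Finset.mem_powersetCard, mem_filter] at hp
          obtain ⟨⟨hU, hUc⟩, ⟨hV, hVc⟩, hVP⟩ := hp
          have hdisj : Disjoint p.1 p.2 := by
            apply Finset.disjoint_left.2
            intro x hx1 hx2
            have h1 := hU hx1; have h2 := hV hx2
            simp only [Finset.mem_product, Finset.mem_singleton, Finset.mem_erase] at h1 h2
            exact h2.1.1 (h1.1 ▸ rfl)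
          simp only [Finset.mem_coe, mem_filter, Finset.mem_powersetCard]
          refine ⟨⟨fun x hx => ?_, ?_⟩, fun j hj => ?_⟩
          · rcases Finset.mem_union.1 hx with h | h
            · have := hU h
              simp only [Finset.mem_product, Finset.mem_singleton] at this
              simp [Finset.mem_product, this.1, haB]
            · have := hV h
              simp only [Finset.mem_product, Finset.mem_erase] at this
              simp [Finset.mem_product, this.1.2]
          · rw [Finset.card_union_of_disjoint hdisj, hUc, hVc]; omega
          · rw [Finset.filter_union]
            rcases Finset.mem_insert.1 hj with h | h
            · subst h
              have h1 : p.1.filter (fun x => x.1 = j) = p.1 := by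
                apply Finset.filter_true_of_mem
                intro x hx
                have := hU hx
                simp only [Finset.mem_product, Finset.mem_singleton] at this
                exact this.1
              have h2 : p.2.filter (fun x => x.1 = j) = ∅ := by
                apply Finset.filter_false_of_mem
                intro x hx
                have := hV hx
                simp only [Finset.mem_product, Finset.mem_erase] at this
                exact this.1.1
              rw [h1, h2, Finset.union_empty, hUc]
            · have hja : j ≠ a := fun hh => ha (hh ▸ h)
              have h1 : p.1.filter (fun x => x.1 = j) = ∅ := by
                apply Finset.filter_false_of_mem
                intro x hx
                have := hU hx
                simp only [Finset.mem_product, Finset.mem_singleton] at this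
                rw [this.1]; exact fun hh => hja hh.symm
              rw [h1, Finset.empty_union]
              exact hVP j h
        · intro T _
          exact Finset.filter_union_filter_not_eq _ T
        · intro p hp
          simp only [Finset.mem_coe, Finset.mem_product, Finset.mem_powersetCard, mem_filter] at hp
          obtain ⟨⟨hU, _⟩, ⟨hV, _⟩, _⟩ := hp
          have e1 : (p.1 ∪ p.2).filter (fun x => x.1 = a) = p.1 := by
            rw [Finset.filter_union]
            have h1 : p.1.filter (fun x => x.1 = a) = p.1 :=
              Finset.filter_true_of_mem fun x hx => by
                have := hU hx
                simp only [Finset.mem_product, Finset.mem_singleton] at this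
                exact this.1
            have h2 : p.2.filter (fun x => x.1 = a) = ∅ :=
              Finset.filter_false_of_mem fun x hx => by
                have := hV hx
                simp only [Finset.mem_product, Finset.mem_erase] at this
                exact this.1.1
            rw [h1, h2, Finset.union_empty]
          have e2 : (p.1 ∪ p.2).filter (fun x => ¬ x.1 = a) = p.2 := by
            rw [Finset.filter_union]
            have h1 : p.1.filter (fun x => ¬ x.1 = a) = ∅ :=
              Finset.filter_false_of_mem fun x hx => by
                have := hU hx
                simp only [Finset.mem_product, Finset.mem_singleton] at this
                simp [this.1]
            have h2 : p.2.filter (fun x => ¬ x.1 = a) = p.2 :=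
              Finset.filter_true_of_mem fun x hx => by
                have := hV hx
                simp only [Finset.mem_product, Finset.mem_erase] at this
                exact this.1.1
            rw [h1, h2, Finset.empty_union]
          beta_reduce
          rw [e1, e2]
      rw [key, Finset.card_product, Finset.card_powersetCard, Finset.card_product,
        Finset.card_singleton, Finset.card_univ, Fintype.card_fin, one_mul,
        ih (B.erase a) (n - r) hsB hsn, Finset.card_erase_of_mem haB]
      have e1 : n - r - r * s.card = n - r * (s.card + 1) := by
        rw [Nat.mul_add, Nat.mul_one]; omega
      have e2 : B.card - 1 - s.card = B.card - (s.card + 1) := by omega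
      rw [e1, e2, pow_succ]
      ring

lemma main_nat (N M n r i : ℕ) (hiN : i ≤ N) (hri : r * i ≤ n) :
    (∑ T ∈ Finset.powersetCard n (Finset.univ : Finset (Fin N × Fin M)),
        ((Finset.univ.filter fun j : Fin N =>
            (T.filter fun x => x.1 = j).card = r).card.descFactorial i))
      = N.descFactorial i * (M.choose r) ^ i * ((N - i) * M).choose (n - r * i) := by
  have step1 : ∀ T : Finset (Fin N × Fin M),
      ((Finset.univ.filter fun j : Fin N =>
          (T.filter fun x => x.1 = j).card = r).card.descFactorial i)
        = i ! * ∑ A ∈ (Finset.univ : Finset (Fin N)).powersetCard i,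
            (if (∀ j ∈ A, (T.filter fun x => x.1 = j).card = r) then 1 else 0) := by
    intro T
    rw [Nat.descFactorial_eq_factorial_mul_choose]
    congr 1
    rw [← Finset.card_powersetCard, ← Finset.card_filter]
    congr 1
    ext A
    simp only [Finset.mem_powersetCard, Finset.mem_filter, Finset.subset_iff,
      Finset.mem_filter, Finset.mem_univ, true_and, Finset.subset_univ]
    tauto
  calc (∑ T ∈ Finset.powersetCard n (Finset.univ : Finset (Fin N × Fin M)),
        ((Finset.univ.filter fun j : Fin N =>
            (T.filter fun x => x.1 = j).card = r).card.descFactorial i))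
      = i ! * ∑ A ∈ (Finset.univ : Finset (Fin N)).powersetCard i,
          ∑ T ∈ Finset.powersetCard n (Finset.univ : Finset (Fin N × Fin M)),
            (if (∀ j ∈ A, (T.filter fun x => x.1 = j).card = r) then 1 else 0) := by
        rw [Finset.sum_congr rfl (fun T _ => step1 T), ← Finset.mul_sum, Finset.sum_comm]
    _ = i ! * ∑ A ∈ (Finset.univ : Finset (Fin N)).powersetCard i,
          (M.choose r) ^ i * ((N - i) * M).choose (n - r * i) := by
        congr 1
        apply Finset.sum_congr rfl
        intro A hA
        rw [← Finset.card_filter]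
        have hAcard : A.card = i := (Finset.mem_powersetCard.1 hA).2
        have := count_core N M r A Finset.univ n (Finset.subset_univ A) (by rw [hAcard]; exact hri)
        rw [Finset.univ_product_univ] at this
        rw [this, hAcard, Finset.card_univ, Fintype.card_fin]
    _ = N.descFactorial i * (M.choose r) ^ i * ((N - i) * M).choose (n - r * i) := by
        rw [Finset.sum_const, Finset.card_powersetCard, Finset.card_univ, Fintype.card_fin,
          smul_eq_mul, Nat.descFactorial_eq_factorial_mul_choose]
        ring


theorem colored_balls_factorial_moment (N M n r i : ℕ) (hM : 0 < M) (hn : n ≤ N * M)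
    (hiN : i ≤ N) (hri : r * i ≤ n) :
    (∑ T ∈ Finset.powersetCard n (Finset.univ : Finset (Fin N × Fin M)),
        (((Finset.univ.filter fun j : Fin N =>
            (T.filter fun x => x.1 = j).card = r).card.descFactorial i : ℚ))) /
        ((N * M).choose n : ℚ) =
      (N.descFactorial i : ℚ) * ((M.choose r : ℚ)) ^ i * (((N - i) * M).choose (n - r * i)) /
        ((N * M).choose n) := by
  congr 1
  rw [← Nat.cast_sum, main_nat N M n r i hiN hri]
  push_cast
  ring
end

section
/- For all natural numbers m and s, s · Σ_{k=0}^m C(m,k) (k+1)^{k−1} (m−k+s)^{m−k−1} = (s+1)(m+1+s)^{m−1}. -/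
open Finset Polynomial

lemma findiff : ∀ (n j : ℕ), j < n → ∀ (x : ℚ),
    ∑ k ∈ Finset.range (n + 1), (-1 : ℚ) ^ k * (n.choose k : ℚ) * (x + k) ^ j = 0 := by
  intro n
  induction n with
  | zero => intro j hj; omega
  | succ n ih =>
    intro j hj x
    have step : ∑ k ∈ Finset.range (n + 2), (-1 : ℚ) ^ k * ((n+1).choose k : ℚ) * (x + k) ^ j
        = ∑ k ∈ Finset.range (n + 1), (-1 : ℚ) ^ k * (n.choose k : ℚ)
            * ((x + k) ^ j - (x + k + 1) ^ j) := by
      have h1 := Finset.sum_range_succ' (fun k => (-1 : ℚ) ^ k * ((n+1).choose k : ℚ) * (x + k) ^ j) (n+1)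
      have h2 := Finset.sum_range_succ' (fun k => (-1 : ℚ) ^ k * (n.choose k : ℚ) * (x + k) ^ j) (n+1)
      have h3 := Finset.sum_range_succ (fun k => (-1 : ℚ) ^ k * (n.choose k : ℚ) * (x + k) ^ j) (n+1)
      have h1' : ∑ k ∈ Finset.range (n+1),
          (-1 : ℚ) ^ (k+1) * ((n+1).choose (k+1) : ℚ) * (x + ↑(k+1)) ^ j
          = (∑ k ∈ Finset.range (n+1), -((-1 : ℚ) ^ k * (n.choose k : ℚ) * (x + k + 1) ^ j))
            + ∑ k ∈ Finset.range (n+1), (-1 : ℚ) ^ (k+1) * (n.choose (k+1) : ℚ) * (x + (↑k+1)) ^ j := by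
        rw [← Finset.sum_add_distrib]
        refine Finset.sum_congr rfl fun k _ => ?_
        rw [Nat.choose_succ_succ]
        push_cast
        ring
      have h4 : (-1 : ℚ) ^ (n+1) * (n.choose (n+1) : ℚ) * (x + (↑n + 1)) ^ j = 0 := by
        simp [Nat.choose_succ_self]
      have h5 : ∑ k ∈ Finset.range (n+1), -((-1 : ℚ) ^ k * (n.choose k : ℚ) * (x + k + 1) ^ j)
          = - ∑ k ∈ Finset.range (n+1), (-1 : ℚ) ^ k * (n.choose k : ℚ) * (x + k + 1) ^ j :=
        Finset.sum_neg_distrib _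
      rw [h1, h1', h5]
      simp only [mul_sub, Finset.sum_sub_distrib]
      rw [h3] at h2
      push_cast at h2 h4 ⊢
      rw [h4] at h2
      simp only [add_assoc, Nat.choose_zero_right, Nat.cast_one, one_mul] at h2 ⊢
      linarith [h2]
    rw [step]
    have hterm : ∀ k ∈ Finset.range (n+1),
        (-1 : ℚ) ^ k * (n.choose k : ℚ) * ((x + k) ^ j - (x + k + 1) ^ j)
        = ∑ t ∈ Finset.range j, -((j.choose t : ℚ) * ((-1 : ℚ) ^ k * (n.choose k : ℚ) * (x + k) ^ t)) := by
      intro k _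
      have hexp : (x + k + 1) ^ j = ∑ t ∈ Finset.range (j+1), (x + k) ^ t * (j.choose t : ℚ) := by
        rw [add_pow]
        simp
      rw [hexp, Finset.sum_range_succ]
      simp only [Nat.choose_self, Nat.cast_one]
      have hb : (x + (k:ℚ)) ^ j - (∑ t ∈ Finset.range j, (x + k) ^ t * (j.choose t : ℚ) + (x + k) ^ j * 1)
          = -∑ t ∈ Finset.range j, (x + (k:ℚ)) ^ t * (j.choose t : ℚ) := by ring
      rw [hb, mul_neg, Finset.mul_sum, Finset.sum_neg_distrib, neg_inj]
      exact Finset.sum_congr rfl fun t _ => by ring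
    rw [Finset.sum_congr rfl hterm, Finset.sum_comm]
    refine Finset.sum_eq_zero fun t ht => ?_
    have h0 : ∑ k ∈ Finset.range (n+1), (-1 : ℚ) ^ k * (n.choose k : ℚ) * (x + k) ^ t = 0 :=
      ih t (by have := Finset.mem_range.mp ht; omega) x
    calc ∑ k ∈ Finset.range (n+1), -((j.choose t : ℚ) * ((-1 : ℚ) ^ k * (n.choose k : ℚ) * (x + k) ^ t))
        = -((j.choose t : ℚ) * ∑ k ∈ Finset.range (n+1), (-1 : ℚ) ^ k * (n.choose k : ℚ) * (x + k) ^ t) := by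
          rw [Finset.sum_neg_distrib, ← Finset.mul_sum]
      _ = 0 := by rw [h0]; ring

noncomputable def Pab (n : ℕ) : Polynomial ℚ :=
  ∑ k ∈ Finset.range (n+1),
    C ((n.choose k : ℚ) * ((k : ℚ) + 1) ^ (k - 1)) * (X - C (k : ℚ)) ^ (n - k)

lemma Pab_eval (n : ℕ) (y : ℚ) : (Pab n).eval y
    = ∑ k ∈ Finset.range (n+1), (n.choose k : ℚ) * ((k : ℚ) + 1) ^ (k - 1) * (y - k) ^ (n - k) := by
  rw [Pab, Polynomial.eval_finset_sum]
  simp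

lemma Pab_eval_neg_one (n : ℕ) (hn : 1 ≤ n) : (Pab n).eval (-1) = 0 := by
  rw [Pab_eval]
  have hterm : ∀ k ∈ Finset.range (n+1),
      (n.choose k : ℚ) * ((k : ℚ) + 1) ^ (k - 1) * ((-1 : ℚ) - k) ^ (n - k)
      = (-1 : ℚ) ^ n * ((-1 : ℚ) ^ k * (n.choose k : ℚ) * ((1 : ℚ) + k) ^ (n - 1)) := by
    intro k hk
    have hk' : k ≤ n := by have := Finset.mem_range.mp hk; omega
    have hneg : ((-1 : ℚ) - k) ^ (n - k) = (-1 : ℚ) ^ (n - k) * ((k : ℚ) + 1) ^ (n - k) := by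
      rw [← mul_pow]; ring_nf
    have hsign : (-1 : ℚ) ^ (n - k) = (-1 : ℚ) ^ n * (-1 : ℚ) ^ k := by
      have h1 : (-1 : ℚ) ^ (n - k) * ((-1 : ℚ) ^ k * (-1 : ℚ) ^ k) = (-1 : ℚ) ^ n * (-1 : ℚ) ^ k := by
        rw [← mul_assoc, ← pow_add, Nat.sub_add_cancel hk']
      have h2 : (-1 : ℚ) ^ k * (-1 : ℚ) ^ k = 1 := by
        rw [← pow_add, ← two_mul, pow_mul]; norm_num
      rw [h2, mul_one] at h1; exact h1
    rcases Nat.eq_zero_or_pos k with hk0 | hk0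
    · subst hk0; simp [hneg, hsign]
    · have hpow : ((k : ℚ) + 1) ^ (k - 1) * ((k : ℚ) + 1) ^ (n - k) = ((k : ℚ) + 1) ^ (n - 1) := by
        rw [← pow_add]; congr 1; omega
      rw [hneg, hsign]
      calc (n.choose k : ℚ) * ((k : ℚ) + 1) ^ (k - 1) * ((-1:ℚ)^n * (-1:ℚ)^k * (((k:ℚ)+1) ^ (n-k)))
          = ((-1:ℚ)^n * ((-1:ℚ)^k * (n.choose k : ℚ))) * (((k:ℚ)+1)^(k-1) * ((k:ℚ)+1)^(n-k)) := by ring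
        _ = (-1 : ℚ) ^ n * ((-1 : ℚ) ^ k * (n.choose k : ℚ) * ((1 : ℚ) + k) ^ (n - 1)) := by
            rw [hpow]; ring_nf
  rw [Finset.sum_congr rfl hterm, ← Finset.mul_sum, findiff n (n-1) (by omega) 1, mul_zero]

lemma Pab_deriv (n : ℕ) : derivative (Pab (n+1)) = C ((n : ℚ) + 1) * Pab n := by
  rw [Pab, Pab, derivative_sum, Finset.mul_sum, Finset.sum_range_succ]
  have hlast : derivative (C ((((n+1)).choose (n+1) : ℚ) * (((n+1 : ℕ) : ℚ) + 1) ^ ((n+1) - 1))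
      * (X - C ((n+1 : ℕ) : ℚ)) ^ (n + 1 - (n+1))) = 0 := by
    rw [Nat.sub_self, pow_zero, mul_one, derivative_C]
  rw [hlast, add_zero]
  refine Finset.sum_congr rfl fun k hk => ?_
  have hk' : k ≤ n := by have := Finset.mem_range.mp hk; omega
  rw [derivative_C_mul, derivative_pow, derivative_X_sub_C, mul_one]
  have h0 : (n+1).choose k * (n + 1 - k) = (n+1) * n.choose k :=
    (Nat.choose_mul_succ_eq n k).symm.trans (Nat.mul_comm _ _)
  have hchoose : ((n+1).choose k : ℚ) * ((n + 1 - k : ℕ) : ℚ) = ((n : ℚ) + 1) * (n.choose k : ℚ) := by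
    exact_mod_cast congrArg (Nat.cast : ℕ → ℚ) h0
  have hexp : n + 1 - k - 1 = n - k := by omega
  rw [hexp, ← mul_assoc, ← C_mul, ← mul_assoc, ← C_mul]
  congr 2
  linear_combination ((k : ℚ) + 1) ^ (k - 1) * hchoose

lemma Pab_eq (n : ℕ) : Pab n = (X + Polynomial.C 1) ^ n := by
  induction n with
  | zero => simp [Pab]
  | succ n ih =>
    have hd : derivative (Pab (n+1) - (X + C 1) ^ (n+1)) = 0 := by
      rw [derivative_sub, Pab_deriv, ih, derivative_pow]
      simp [mul_comm]
    have hC := Polynomial.eq_C_of_derivative_eq_zero hd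
    have hev : (Pab (n+1) - (X + C 1) ^ (n+1)).eval (-1) = 0 := by
      rw [eval_sub, Pab_eval_neg_one (n+1) (by omega)]
      simp
    rw [hC, eval_C] at hev
    rw [hev, map_zero] at hC
    exact sub_eq_zero.mp hC

lemma abel1 (n : ℕ) (y : ℚ) :
    ∑ k ∈ Finset.range (n+1), (n.choose k : ℚ) * ((k : ℚ) + 1) ^ (k - 1) * (y - k) ^ (n - k)
      = (y + 1) ^ n := by
  have h := congrArg (Polynomial.eval y) (Pab_eq n)
  rw [Pab_eval] at h
  simpa using h

theorem abel_type_identity (m s : ℕ) (hs : 1 ≤ s) :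
    (s : ℚ) * ∑ k ∈ Finset.range (m + 1),
        (m.choose k : ℚ) * ((k : ℚ) + 1) ^ ((k : ℤ) - 1) *
          ((m : ℚ) - k + s) ^ ((m : ℤ) - k - 1) =
      ((s : ℚ) + 1) * ((m : ℚ) + 1 + s) ^ ((m : ℤ) - 1) := by
  have hs0 : (s : ℚ) ≠ 0 := by positivity
  rcases Nat.eq_zero_or_pos m with hm | hm
  · subst hm
    rw [Finset.sum_range_one]
    norm_num
    have h1s : (1 : ℚ) + s ≠ 0 := by positivity
    field_simp
    ring
  -- m ≥ 1
  have key : ∀ k ∈ Finset.range (m+1),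
      (s : ℚ) * ((m.choose k : ℚ) * ((k : ℚ) + 1) ^ ((k : ℤ) - 1) *
          ((m : ℚ) - k + s) ^ ((m : ℤ) - k - 1))
      = (m.choose k : ℚ) * ((k : ℚ) + 1) ^ (k - 1) * (((m : ℚ) + s) - k) ^ (m - k)
        - (m : ℚ) * (((m-1).choose k : ℚ) * ((k : ℚ) + 1) ^ (k - 1) * (((m : ℚ) + s) - k) ^ (m - 1 - k)) := by
    intro k hk
    have hk' : k ≤ m := by have := Finset.mem_range.mp hk; omega
    have hz1 : ((k : ℚ) + 1) ^ ((k : ℤ) - 1) = ((k : ℚ) + 1) ^ (k - 1) := by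
      rcases Nat.eq_zero_or_pos k with hk0 | hk0
      · subst hk0; norm_num
      · have : (k : ℤ) - 1 = ((k - 1 : ℕ) : ℤ) := by omega
        rw [this, zpow_natCast]
    have hcast : ((m - k : ℕ) : ℚ) = (m : ℚ) - k := by
      push_cast [Nat.cast_sub hk']; ring
    rcases Nat.lt_or_ge k m with hkm | hkm
    · -- k < m
      have he : (m : ℤ) - k - 1 = ((m - k - 1 : ℕ) : ℤ) := by omega
      have he3 : m - 1 - k = m - k - 1 := by omega
      have hch : (m : ℚ) * ((m-1).choose k : ℚ) = ((m : ℚ) - k) * (m.choose k : ℚ) := by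
        have h0 : (m-1).choose k * m = m.choose k * (m - k) := by
          have := Nat.choose_mul_succ_eq (m-1) k
          rwa [Nat.sub_add_cancel hm] at this
        have h1 : ((m : ℚ)) * ((m-1).choose k : ℚ) = ((m - k : ℕ) : ℚ) * (m.choose k : ℚ) := by
          exact_mod_cast (Nat.mul_comm _ _).trans (h0.trans (Nat.mul_comm _ _))
        rwa [hcast] at h1
      have hp : (((m : ℚ) + s) - k) ^ (m - k)
          = (((m : ℚ) + s) - k) * (((m : ℚ) + s) - k) ^ (m - k - 1) := by
        have h := pow_succ (((m : ℚ) + s) - k) (m - k - 1)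
        rw [show m - k - 1 + 1 = m - k by omega] at h
        rw [h]; ring
      rw [hz1, he, zpow_natCast, he3]
      linear_combination (-(↑(m.choose k) * ((k:ℚ)+1)^(k-1))) * hp
        + (((k:ℚ)+1)^(k-1) * (((m:ℚ) + s - k) ^ (m - k - 1))) * hch
    · -- k = m
      have hkm' : k = m := by omega
      subst hkm'
      have hch0 : (k-1).choose k = 0 := Nat.choose_eq_zero_of_lt (by omega)
      have he : (k : ℤ) - k - 1 = -1 := by ring
      have hbb : (k : ℚ) - k + s = (s : ℚ) := by ring
      rw [hz1, he, hbb, zpow_neg_one, hch0]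
      have h2 : ((k:ℚ) + s) - k = (s:ℚ) := by ring
      rw [h2]
      field_simp
      simp
  rw [Finset.mul_sum, Finset.sum_congr rfl key, Finset.sum_sub_distrib]
  have hA : ∑ k ∈ Finset.range (m+1),
      (m.choose k : ℚ) * ((k : ℚ) + 1) ^ (k - 1) * (((m : ℚ) + s) - k) ^ (m - k)
      = ((m : ℚ) + s + 1) ^ m := abel1 m ((m : ℚ) + s)
  have hB : ∑ k ∈ Finset.range (m+1),
      (m : ℚ) * (((m-1).choose k : ℚ) * ((k : ℚ) + 1) ^ (k - 1) * (((m : ℚ) + s) - k) ^ (m - 1 - k))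
      = (m : ℚ) * ((m : ℚ) + s + 1) ^ (m - 1) := by
    rw [← Finset.mul_sum]
    congr 1
    have hrange : m + 1 = (m - 1 + 1) + 1 := by omega
    rw [hrange, Finset.sum_range_succ]
    have hz : ((m-1).choose (m-1+1) : ℚ) * (((m-1+1 : ℕ) : ℚ) + 1) ^ ((m-1+1) - 1) * (((m : ℚ) + s) - ((m-1+1 : ℕ) : ℚ)) ^ (m - 1 - (m-1+1)) = 0 := by
      rw [Nat.choose_succ_self]
      norm_num
    rw [hz, add_zero]
    exact abel1 (m-1) ((m : ℚ) + s)
  rw [hA, hB]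
  have hz2 : ((m : ℚ) + 1 + s) ^ ((m : ℤ) - 1) = ((m : ℚ) + s + 1) ^ (m - 1) := by
    have : (m : ℤ) - 1 = ((m - 1 : ℕ) : ℤ) := by omega
    rw [this, zpow_natCast]
    ring_nf
  rw [hz2]
  have hps : ((m : ℚ) + s + 1) ^ m = ((m : ℚ) + s + 1) * ((m : ℚ) + s + 1) ^ (m - 1) := by
    have h := pow_succ ((m : ℚ) + s + 1) (m - 1)
    rw [show m - 1 + 1 = m by omega] at h
    rw [h]; ring
  rw [hps]
  ring
end

section
/- For the uniform random forest with N roots and n non-root vertices, with ξ_i the number of non-root vertices of the i-th tree, the i-th factorial moment of S_n^(r) = Σ_{j=1}^N 1{ξ_j = r} equals c_{i,n} = ((r+1)^{i(r−1)}/(r!)^i) · ((N−i)/N) · (N)_i (n)_{ri} / (n+N−(r+1)i)^{ri} · (1 − (r+1)i/(n+N))^{n−1}. -/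
open Finset
open Polynomial

noncomputable def abelP : ℕ → Polynomial ℚ
  | 0 => 1
  | (m+1) => X * (X + C ((m : ℚ)+1)) ^ m

lemma abelP_eval_zero (m : ℕ) : (abelP m).eval 0 = if m = 0 then 1 else 0 := by
  cases m <;> simp [abelP]

lemma abelP_deriv (m : ℕ) :
    derivative (abelP (m+1)) = C ((m : ℚ)+1) * ((abelP m).comp (X + 1)) := by
  cases m with
  | zero => simp [abelP]
  | succ k =>
    simp only [abelP, derivative_mul, derivative_X, derivative_pow, derivative_add,
      derivative_C, add_zero, mul_comp, pow_comp, add_comp, X_comp, C_comp, one_comp]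
    push_cast
    simp only [map_add, map_one, map_ofNat]
    ring

lemma poly_ext {p q : ℚ[X]} (h1 : derivative p = derivative q) (h2 : p.eval 0 = q.eval 0) :
    p = q := by
  have hd : derivative (p - q) = 0 := by rw [derivative_sub, h1, sub_self]
  have := Polynomial.eq_C_of_derivative_eq_zero hd
  have h0 : (p - q).coeff 0 = 0 := by
    simp [Polynomial.coeff_sub, Polynomial.coeff_zero_eq_eval_zero, h2]
  rw [h0, map_zero] at this
  exact sub_eq_zero.mp this

lemma abel_conv : ∀ (m : ℕ) (y : ℚ),
    ∑ a ∈ range (m+1), C ((m.choose a : ℚ) * (abelP (m-a)).eval y) * abelP a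
      = (abelP m).comp (X + C y) := by
  intro m
  induction m with
  | zero => intro y; simp [abelP]
  | succ m ih =>
    intro y
    apply poly_ext
    · have key1 : ∀ a ∈ range (m+1),
          C (((m+1).choose (a+1) : ℚ) * (abelP (m+1-(a+1))).eval y) * derivative (abelP (a+1))
            = C ((m:ℚ)+1) *
              (C ((m.choose a : ℚ) * (abelP (m-a)).eval y) * (abelP a).comp (X+1)) := by
        intro a _
        rw [abelP_deriv]
        have hm : m + 1 - (a+1) = m - a := by omega
        rw [hm]
        have hnat : (((m+1).choose (a+1) : ℚ)) * ((a:ℚ)+1) = ((m:ℚ)+1) * (m.choose a : ℚ) := by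
          exact_mod_cast congrArg (Nat.cast (R := ℚ)) (Nat.add_one_mul_choose_eq m a).symm
        calc C (((m+1).choose (a+1) : ℚ) * (abelP (m-a)).eval y) *
              (C ((a:ℚ)+1) * (abelP a).comp (X+1))
            = C ((((m+1).choose (a+1) : ℚ)) * ((a:ℚ)+1) * ((abelP (m-a)).eval y)) *
                (abelP a).comp (X+1) := by simp only [map_mul]; ring
          _ = _ := by rw [hnat]; simp only [map_mul]; ring
      have hstep : derivative (∑ a ∈ range (m+1+1),
              C (((m+1).choose a : ℚ) * (abelP (m+1-a)).eval y) * abelP a)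
          = C ((m:ℚ)+1) *
              ∑ a ∈ range (m+1),
                C ((m.choose a : ℚ) * (abelP (m-a)).eval y) * (abelP a).comp (X+1) := by
        rw [derivative_sum]
        simp only [derivative_C_mul]
        rw [Finset.sum_range_succ']
        rw [Finset.sum_congr rfl key1]
        have : derivative (abelP 0) = 0 := by
          show derivative (1 : ℚ[X]) = 0
          exact derivative_one
        rw [this, mul_zero, add_zero, ← Finset.mul_sum]
      rw [hstep]
      have hcomp : ∑ a ∈ range (m+1),
            C ((m.choose a : ℚ) * (abelP (m-a)).eval y) * (abelP a).comp (X+1)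
          = (abelP m).comp (X + C y + 1) := by
        have h1 := congrArg (fun p => p.comp (X + 1 : ℚ[X])) (ih y)
        have h2 : (∑ a ∈ range (m+1),
              C ((m.choose a : ℚ) * (abelP (m-a)).eval y) * abelP a).comp (X + 1 : ℚ[X])
            = ∑ a ∈ range (m+1),
              C ((m.choose a : ℚ) * (abelP (m-a)).eval y) * (abelP a).comp (X+1) := by
          rw [← Polynomial.coe_compRingHom_apply, map_sum]
          refine Finset.sum_congr rfl fun a _ => ?_
          rw [Polynomial.coe_compRingHom_apply, mul_comp, C_comp]
        have h3 : ((abelP m).comp (X + C y)).comp (X + 1 : ℚ[X])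
            = (abelP m).comp (X + C y + 1) := by
          rw [Polynomial.comp_assoc]
          congr 1
          simp [add_comp, X_comp, C_comp]
          ring
        rw [← h2, h1, h3]
      rw [hcomp]
      -- goal: C(m+1) * (abelP m).comp (X + C y + 1) = derivative ((abelP (m+1)).comp (X + C y))
      rw [derivative_comp, abelP_deriv]
      simp only [derivative_add, derivative_X, derivative_C, add_zero, one_mul, mul_comp, C_comp]
      rw [Polynomial.comp_assoc]
      congr 2
      · simp [add_comp, X_comp, C_comp]
    · -- eval at 0
      rw [Polynomial.eval_comp]
      simp only [eval_add, eval_X, eval_C, zero_add]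
      rw [Polynomial.eval_finset_sum]
      rw [Finset.sum_range_succ']
      simp only [eval_mul, eval_C, abelP_eval_zero]
      simp [Finset.sum_ite_eq]

noncomputable def hFn (m : ℕ) (x : ℚ) : ℚ := (abelP m).eval x / m.factorial

lemma hFn_zero (x : ℚ) : hFn 0 x = 1 := by simp [hFn, abelP]

lemma hFn_succ (m : ℕ) (x : ℚ) :
    hFn (m+1) x = x * (x + ((m:ℚ)+1)) ^ m / (m+1).factorial := by
  simp [hFn, abelP]

lemma hFn_at_zero (m : ℕ) : hFn m 0 = if m = 0 then 1 else 0 := by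
  cases m with
  | zero => simp [hFn_zero]
  | succ k => simp [hFn_succ]

lemma conv_h (m : ℕ) (x y : ℚ) :
    ∑ a ∈ range (m+1), hFn a x * hFn (m-a) y = hFn m (x+y) := by
  have h1 := congrArg (Polynomial.eval x) (abel_conv m y)
  rw [Polynomial.eval_finset_sum, Polynomial.eval_comp] at h1
  simp only [eval_mul, eval_C, eval_add, eval_X] at h1
  have h2 : ∀ a ∈ range (m+1), hFn a x * hFn (m-a) y
      = ((m.choose a : ℚ) * (abelP (m-a)).eval y * (abelP a).eval x) / m.factorial := by
    intro a ha
    rw [Finset.mem_range] at ha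
    have hle : a ≤ m := by omega
    have hfac : (m.choose a : ℚ) * (a.factorial : ℚ) * ((m-a).factorial : ℚ)
        = (m.factorial : ℚ) := by
      exact_mod_cast congrArg (Nat.cast (R := ℚ)) (Nat.choose_mul_factorial_mul_factorial hle)
    unfold hFn
    rw [div_mul_div_comm]
    rw [eq_div_iff (by exact_mod_cast Nat.factorial_ne_zero m)]
    have ha0 : (a.factorial : ℚ) ≠ 0 := by exact_mod_cast Nat.factorial_ne_zero a
    have hb0 : ((m-a).factorial : ℚ) ≠ 0 := by exact_mod_cast Nat.factorial_ne_zero (m-a)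
    field_simp
    linear_combination (-((abelP a).eval x * (abelP (m-a)).eval y)) * hfac
  rw [Finset.sum_congr rfl h2, ← Finset.sum_div, h1, hFn]

noncomputable def wFn (t : ℕ) : ℚ := hFn t 1

lemma df_add (c i : ℕ) :
    (c+1).descFactorial i = c.descFactorial i + i * c.descFactorial (i-1) := by
  cases i with
  | zero => simp
  | succ k =>
    rw [Nat.succ_descFactorial_succ, Nat.descFactorial_succ]
    rcases le_or_gt k c with hkc | hkc
    · have h1 : c + 1 = (c - k) + (k+1) := by omega
      simp only [Nat.succ_sub_one]
      rw [h1, add_mul]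
    · simp [Nat.descFactorial_of_lt hkc]

lemma sum_adT_succ {M m : ℕ} (f : (Fin (M+1) → ℕ) → ℚ) :
    ∑ k ∈ Finset.Nat.antidiagonalTuple (M+1) m, f k
      = ∑ p ∈ Finset.HasAntidiagonal.antidiagonal m, ∑ k ∈ Finset.Nat.antidiagonalTuple M p.2,
          f (Fin.cons p.1 k) := by
  rw [show (∑ p ∈ Finset.HasAntidiagonal.antidiagonal m, ∑ k ∈ Finset.Nat.antidiagonalTuple M p.2,
        f (Fin.cons p.1 k))
      = ∑ q ∈ (Finset.HasAntidiagonal.antidiagonal m).sigma (fun p => Finset.Nat.antidiagonalTuple M p.2),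
        f (Fin.cons q.1.1 q.2) from (Finset.sum_sigma (Finset.HasAntidiagonal.antidiagonal m)
        (fun p => Finset.Nat.antidiagonalTuple M p.2)
        (fun q => f (Fin.cons q.1.1 q.2))).symm]
  refine Finset.sum_nbij'
    (fun k => (⟨(k 0, ∑ j : Fin M, k j.succ), Fin.tail k⟩ : Σ _p : ℕ × ℕ, Fin M → ℕ))
    (fun q => Fin.cons q.1.1 q.2) ?_ ?_ ?_ ?_ ?_
  · intro k hk
    rw [Finset.Nat.mem_antidiagonalTuple] at hk
    rw [Finset.mem_sigma, Finset.HasAntidiagonal.mem_antidiagonal, Finset.Nat.mem_antidiagonalTuple]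
    constructor
    · rw [← hk, Fin.sum_univ_succ]
    · rfl
  · intro q hq
    rw [Finset.mem_sigma, Finset.HasAntidiagonal.mem_antidiagonal, Finset.Nat.mem_antidiagonalTuple] at hq
    rw [Finset.Nat.mem_antidiagonalTuple, Fin.sum_univ_succ]
    simp only [Fin.cons_zero, Fin.cons_succ]
    rw [hq.2, hq.1]
  · intro k _
    exact Fin.cons_self_tail k
  · intro q hq
    rw [Finset.mem_sigma, Finset.HasAntidiagonal.mem_antidiagonal, Finset.Nat.mem_antidiagonalTuple] at hq
    ext
    · simp [Fin.cons_zero]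
    · simp only [Fin.cons_succ]
      exact hq.2
    · simp [Fin.tail_cons]
  · intro k _
    rw [Fin.cons_self_tail]

lemma conv_if (m t : ℕ) (x : ℚ) :
    ∑ p ∈ Finset.HasAntidiagonal.antidiagonal m, wFn p.1 * (if t ≤ p.2 then hFn (p.2 - t) x else 0)
      = if t ≤ m then hFn (m - t) (x + 1) else 0 := by
  rw [Finset.Nat.sum_antidiagonal_eq_sum_range_succ_mk]
  by_cases htm : t ≤ m
  · have hcg : ∀ a ∈ range (m+1), wFn a * (if t ≤ m - a then hFn (m - a - t) x else 0)
        = if a ∈ range (m - t + 1) then hFn a 1 * hFn ((m-t) - a) x else 0 := by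
      intro a ha
      rw [Finset.mem_range] at ha
      by_cases hat : a ≤ m - t
      · rw [if_pos (by omega), if_pos (by rw [Finset.mem_range]; omega)]
        have : m - a - t = (m - t) - a := by omega
        rw [this, wFn]
      · rw [if_neg (by omega), if_neg (by rw [Finset.mem_range]; omega), mul_zero]
    rw [Finset.sum_congr rfl hcg, Finset.sum_ite_mem]
    have hsub : range (m+1) ∩ range (m - t + 1) = range (m - t + 1) := by
      rw [Finset.inter_eq_right]
      intro a ha
      rw [Finset.mem_range] at *
      omega
    rw [hsub, conv_h (m - t) 1 x, if_pos htm, add_comm]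
  · rw [if_neg htm]
    apply Finset.sum_eq_zero
    intro a ha
    rw [Finset.mem_range] at ha
    rw [if_neg (by omega), mul_zero]

lemma pick_if (m r : ℕ) (g : ℕ → ℚ) :
    ∑ p ∈ Finset.HasAntidiagonal.antidiagonal m, (if p.1 = r then (1:ℚ) else 0) * g p.2
      = if r ≤ m then g (m - r) else 0 := by
  rw [Finset.Nat.sum_antidiagonal_eq_sum_range_succ_mk]
  simp only [ite_mul, one_mul, zero_mul]
  rw [Finset.sum_ite_eq' (range (m+1)) r (fun a => g (m - a))]
  simp [Nat.lt_succ_iff]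

lemma key_lemma (r : ℕ) : ∀ (M i m : ℕ),
    ∑ k ∈ Finset.Nat.antidiagonalTuple M m,
      (∏ j, wFn (k j)) *
        (((Finset.univ.filter fun j => k j = r).card).descFactorial i : ℚ)
    = (M.descFactorial i : ℚ) * wFn r ^ i *
        (if r * i ≤ m then hFn (m - r * i) ((M:ℚ) - i) else 0) := by
  intro M
  induction M with
  | zero =>
    intro i m
    cases m with
    | zero =>
      rw [Finset.Nat.antidiagonalTuple_zero_zero]
      cases i with
      | zero => simp [hFn_zero]
      | succ i' => simp
    | succ m' =>
      rw [Finset.Nat.antidiagonalTuple_zero_succ]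
      cases i with
      | zero => simp [hFn_at_zero]
      | succ i' => simp
  | succ M ih =>
    intro i m
    rw [sum_adT_succ]
    have inner : ∀ p ∈ Finset.HasAntidiagonal.antidiagonal m,
        (∑ k ∈ Finset.Nat.antidiagonalTuple M p.2,
          (∏ j, wFn ((Fin.cons p.1 k : Fin (M+1) → ℕ) j)) *
            (((Finset.univ.filter fun j => (Fin.cons p.1 k : Fin (M+1) → ℕ) j = r).card).descFactorial i : ℚ))
        = wFn p.1 * ((M.descFactorial i : ℚ) * wFn r ^ i *
              (if r * i ≤ p.2 then hFn (p.2 - r * i) ((M:ℚ) - i) else 0))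
          + ((if p.1 = r then (1:ℚ) else 0) * (i:ℚ) * wFn p.1) *
              ((M.descFactorial (i-1) : ℚ) * wFn r ^ (i-1) *
                (if r * (i-1) ≤ p.2 then hFn (p.2 - r * (i-1)) ((M:ℚ) - ((i-1:ℕ):ℚ)) else 0)) := by
      intro p _
      have hsplit : ∀ k ∈ Finset.Nat.antidiagonalTuple M p.2,
          (∏ j, wFn ((Fin.cons p.1 k : Fin (M+1) → ℕ) j)) *
            (((Finset.univ.filter fun j => (Fin.cons p.1 k : Fin (M+1) → ℕ) j = r).card).descFactorial i : ℚ)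
          = wFn p.1 * ((∏ j, wFn (k j)) *
                (((Finset.univ.filter fun j => k j = r).card).descFactorial i : ℚ))
            + ((if p.1 = r then (1:ℚ) else 0) * (i:ℚ) * wFn p.1) *
                ((∏ j, wFn (k j)) *
                  (((Finset.univ.filter fun j => k j = r).card).descFactorial (i-1) : ℚ)) := by
        intro k _
        have hprod : (∏ j, wFn ((Fin.cons p.1 k : Fin (M+1) → ℕ) j)) = wFn p.1 * ∏ j, wFn (k j) := by
          rw [Fin.prod_univ_succ]
          simp [Fin.cons_zero, Fin.cons_succ]
        have hcard : (Finset.univ.filter fun j => (Fin.cons p.1 k : Fin (M+1) → ℕ) j = r).card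
            = (if p.1 = r then 1 else 0) + (Finset.univ.filter fun j => k j = r).card := by
          rw [Finset.card_filter, Finset.card_filter, Fin.sum_univ_succ]
          simp [Fin.cons_zero, Fin.cons_succ]
        rw [hprod, hcard]
        by_cases hp1 : p.1 = r
        · rw [if_pos hp1, if_pos hp1]
          have := df_add ((Finset.univ.filter fun j => k j = r).card) i
          rw [add_comm 1 _, this]
          push_cast
          ring
        · rw [if_neg hp1, if_neg hp1]
          push_cast
          ring
      rw [Finset.sum_congr rfl hsplit, Finset.sum_add_distrib, ← Finset.mul_sum,
        ← Finset.mul_sum, ih, ih]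
    rw [Finset.sum_congr rfl inner, Finset.sum_add_distrib]
    have hS1 : ∑ p ∈ Finset.HasAntidiagonal.antidiagonal m,
        wFn p.1 * ((M.descFactorial i : ℚ) * wFn r ^ i *
          (if r * i ≤ p.2 then hFn (p.2 - r * i) ((M:ℚ) - i) else 0))
        = (M.descFactorial i : ℚ) * wFn r ^ i *
            (if r * i ≤ m then hFn (m - r * i) (((M:ℚ) - i) + 1) else 0) := by
      have : ∀ p ∈ Finset.HasAntidiagonal.antidiagonal m,
          wFn p.1 * ((M.descFactorial i : ℚ) * wFn r ^ i *
            (if r * i ≤ p.2 then hFn (p.2 - r * i) ((M:ℚ) - i) else 0))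
          = ((M.descFactorial i : ℚ) * wFn r ^ i) *
              (wFn p.1 * (if r * i ≤ p.2 then hFn (p.2 - r * i) ((M:ℚ) - i) else 0)) := by
        intro p _; ring
      rw [Finset.sum_congr rfl this, ← Finset.mul_sum, conv_if m (r*i) ((M:ℚ) - i)]
    have hS2 : ∑ p ∈ Finset.HasAntidiagonal.antidiagonal m,
        ((if p.1 = r then (1:ℚ) else 0) * (i:ℚ) * wFn p.1) *
          ((M.descFactorial (i-1) : ℚ) * wFn r ^ (i-1) *
            (if r * (i-1) ≤ p.2 then hFn (p.2 - r * (i-1)) ((M:ℚ) - ((i-1:ℕ):ℚ)) else 0))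
        = (if r ≤ m then
            (i:ℚ) * wFn r * ((M.descFactorial (i-1) : ℚ) * wFn r ^ (i-1) *
              (if r * (i-1) ≤ m - r then hFn ((m - r) - r * (i-1)) ((M:ℚ) - ((i-1:ℕ):ℚ)) else 0))
          else 0) := by
      have : ∀ p ∈ Finset.HasAntidiagonal.antidiagonal m,
          ((if p.1 = r then (1:ℚ) else 0) * (i:ℚ) * wFn p.1) *
            ((M.descFactorial (i-1) : ℚ) * wFn r ^ (i-1) *
              (if r * (i-1) ≤ p.2 then hFn (p.2 - r * (i-1)) ((M:ℚ) - ((i-1:ℕ):ℚ)) else 0))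
          = (if p.1 = r then (1:ℚ) else 0) *
              ((i:ℚ) * wFn p.1 * ((M.descFactorial (i-1) : ℚ) * wFn r ^ (i-1) *
                (if r * (i-1) ≤ p.2 then hFn (p.2 - r * (i-1)) ((M:ℚ) - ((i-1:ℕ):ℚ)) else 0))) := by
        intro p _; ring
      rw [Finset.sum_congr rfl this]
      have hpick := pick_if m r (fun b =>
        (i:ℚ) * wFn r * ((M.descFactorial (i-1) : ℚ) * wFn r ^ (i-1) *
          (if r * (i-1) ≤ b then hFn (b - r * (i-1)) ((M:ℚ) - ((i-1:ℕ):ℚ)) else 0)))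
      rw [← hpick]
      apply Finset.sum_congr rfl
      intro p _
      by_cases hp1 : p.1 = r
      · rw [if_pos hp1, hp1]
      · rw [if_neg hp1, zero_mul, zero_mul]
    rw [hS1, hS2]
    -- final combination
    cases i with
    | zero =>
      simp only [Nat.mul_zero, Nat.zero_le, if_true, pow_zero, Nat.descFactorial_zero,
        Nat.cast_one, Nat.cast_zero, mul_zero, zero_mul, mul_one, one_mul]
      have h0 : (if r ≤ m then (0:ℚ) * wFn r * ((M.descFactorial (0-1) : ℚ) * wFn r ^ (0-1) *
            (if r * (0-1) ≤ m - r then hFn ((m - r) - r * (0-1)) ((M:ℚ) - ((0:ℕ)-1:ℕ)) else 0))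
          else 0) = 0 := by
        split <;> simp
      have harg : ((M:ℚ) - (0:ℕ)) + 1 = ((M+1 : ℕ):ℚ) - (0:ℕ) := by push_cast; ring
      simp only [Nat.cast_zero, sub_zero] at harg ⊢
      rw [harg]
      simp
    | succ i' =>
      by_cases hri : r * (i'+1) ≤ m
      · have hexp : r * (i'+1) = r * i' + r := by ring
        have hrm : r ≤ m := by omega
        have hc2 : r * (i' + 1 - 1) ≤ m - r := by
          simp only [Nat.add_sub_cancel]; omega
        have hsub : (m - r) - r * (i' + 1 - 1) = m - r * (i'+1) := by
          simp only [Nat.add_sub_cancel]; omega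
        have hdf : (((M+1).descFactorial (i'+1)) : ℚ)
            = (M.descFactorial (i'+1) : ℚ) + ((i'+1:ℕ):ℚ) * (M.descFactorial ((i'+1)-1) : ℚ) := by
          exact_mod_cast congrArg (Nat.cast (R := ℚ)) (df_add M (i'+1))
        simp only [hri, hrm, hc2, if_true, hsub]
        rw [hdf]
        have harg1 : (M:ℚ) - ((i'+1:ℕ):ℚ) + 1 = ((M+1:ℕ):ℚ) - ((i'+1:ℕ):ℚ) := by
          push_cast; ring
        have harg2 : (M:ℚ) - ((i'+1-1:ℕ):ℚ) = ((M+1:ℕ):ℚ) - ((i'+1:ℕ):ℚ) := by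
          simp only [Nat.add_sub_cancel]; push_cast; ring
        rw [harg1, harg2]
        push_cast
        ring
      · simp only [if_neg hri, mul_zero]
        by_cases hrm : r ≤ m
        · rw [if_pos hrm]
          have hexp : r * (i'+1) = r * i' + r := by ring
          have hnc : ¬ (r * (i' + 1 - 1) ≤ m - r) := by
            simp only [Nat.add_sub_cancel]
            omega
          rw [if_neg hnc]
          simp
        · rw [if_neg hrm]
          simp

lemma wFn_eq (t : ℕ) : wFn t = ((t:ℚ)+1) ^ ((t:ℤ)-1) / t.factorial := by
  cases t with
  | zero => simp [wFn, hFn_zero]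
  | succ s =>
    rw [wFn, hFn_succ]
    have he : ((s+1:ℕ):ℤ) - 1 = (s:ℤ) := by push_cast; ring
    rw [he, zpow_natCast]
    have hb : ((s+1:ℕ):ℚ) + 1 = 1 + ((s:ℚ)+1) := by push_cast; ring
    rw [hb, one_mul]

lemma pow_int_eq (t : ℕ) : ((t:ℚ)+1) ^ ((t:ℤ)-1) = wFn t * t.factorial := by
  rw [wFn_eq]
  have : (t.factorial : ℚ) ≠ 0 := by exact_mod_cast Nat.factorial_ne_zero t
  field_simp



theorem random_forest_factorial_moment (n N r i : ℕ) (hn : 0 < n) (hN : 0 < N)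
    (hi : (r + 1) * i < n + N) :
    ∑ k ∈ Finset.Nat.antidiagonalTuple N n,
        (((n.factorial : ℚ) / ∏ j, ((k j).factorial : ℚ)) *
            (∏ j, ((k j : ℚ) + 1) ^ ((k j : ℤ) - 1)) /
            ((N : ℚ) * ((N : ℚ) + n) ^ ((n : ℤ) - 1))) *
          ((Finset.univ.filter fun j : Fin N => k j = r).card.descFactorial i : ℚ) =
      ((r : ℚ) + 1) ^ ((i : ℤ) * ((r : ℤ) - 1)) / (r.factorial : ℚ) ^ i *
          (((N : ℚ) - i) / N) *
          ((N.descFactorial i : ℚ) * (n.descFactorial (r * i)) /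
            ((n : ℚ) + N - (r + 1) * i) ^ (r * i)) *
        (1 - ((r : ℚ) + 1) * i / ((n : ℚ) + N)) ^ (n - 1) := by
  have hNne : ((N:ℚ)) ≠ 0 := by positivity
  have hnNpos : (0:ℚ) < (n:ℚ) + N := by positivity
  have hnNne : ((n:ℚ) + N) ≠ 0 := ne_of_gt hnNpos
  have hD : (0:ℚ) < (n:ℚ) + N - ((r:ℚ)+1) * i := by
    have h' : (((r+1)*i : ℕ) : ℚ) < ((n + N : ℕ) : ℚ) := by exact_mod_cast hi
    push_cast at h'
    linarith
  have hDne : ((n:ℚ) + N - ((r:ℚ)+1) * i) ≠ 0 := ne_of_gt hD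
  have hrfne : ((r.factorial : ℚ)) ≠ 0 := by exact_mod_cast Nat.factorial_ne_zero r
  -- rewrite zpow in the constant
  have hNP : ((N:ℚ)+n) ^ ((n:ℤ)-1) = ((N:ℚ)+n) ^ ((n-1 : ℕ)) := by
    rw [show ((n:ℤ)-1) = ((n-1:ℕ):ℤ) by omega, zpow_natCast]
  -- per-term rewriting
  have hterm : ∀ k ∈ Finset.Nat.antidiagonalTuple N n,
      (((n.factorial : ℚ) / ∏ j, ((k j).factorial : ℚ)) *
          (∏ j, ((k j : ℚ) + 1) ^ ((k j : ℤ) - 1)) /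
          ((N : ℚ) * ((N : ℚ) + n) ^ ((n : ℤ) - 1))) *
        ((Finset.univ.filter fun j : Fin N => k j = r).card.descFactorial i : ℚ)
      = ((n.factorial : ℚ) / ((N:ℚ) * ((N:ℚ)+n) ^ ((n-1:ℕ)))) *
          ((∏ j, wFn (k j)) *
            ((Finset.univ.filter fun j : Fin N => k j = r).card.descFactorial i : ℚ)) := by
    intro k _
    rw [hNP]
    have hpw : (∏ j, ((k j : ℚ) + 1) ^ ((k j : ℤ) - 1))
        = (∏ j, wFn (k j)) * (∏ j, ((k j).factorial : ℚ)) := by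
      rw [← Finset.prod_mul_distrib]
      exact Finset.prod_congr rfl fun j _ => pow_int_eq (k j)
    rw [hpw]
    have hfne : (∏ j, ((k j).factorial : ℚ)) ≠ 0 := by
      apply Finset.prod_ne_zero_iff.mpr
      intro j _
      exact_mod_cast Nat.factorial_ne_zero (k j)
    have hQne : ((N:ℚ)+n) ^ ((n-1:ℕ)) ≠ 0 := by positivity
    field_simp
  rw [Finset.sum_congr rfl hterm, ← Finset.mul_sum, key_lemma r N i n]
  -- RHS manipulations
  have hA1 : ((r:ℚ) + 1) ^ ((i : ℤ) * ((r : ℤ) - 1)) = (wFn r * r.factorial) ^ i := by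
    rw [mul_comm (i:ℤ) _, zpow_mul, zpow_natCast, pow_int_eq]
  have hRe : (1 - ((r:ℚ)+1) * i / ((n:ℚ)+N)) = ((n:ℚ) + N - ((r:ℚ)+1)*i) / ((n:ℚ)+N) := by
    field_simp
  rw [hA1, hRe, div_pow]
  have hQQ : ((N:ℚ)+n) = ((n:ℚ)+N) := by ring
  rw [hQQ]
  set D : ℚ := (n:ℚ) + N - ((r:ℚ)+1) * i with hDdef
  set Q : ℚ := ((n:ℚ)+N) ^ ((n-1:ℕ)) with hQdef
  have hQne : Q ≠ 0 := by rw [hQdef]; positivity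
  by_cases hrin : r * i ≤ n
  · rw [if_pos hrin]
    have hfdf : ((n - r*i).factorial : ℚ) * (n.descFactorial (r*i) : ℚ) = (n.factorial : ℚ) := by
      exact_mod_cast congrArg (Nat.cast (R := ℚ)) (Nat.factorial_mul_descFactorial hrin)
    rcases Nat.lt_or_ge (r*i) n with hlt | hge
    · -- r*i < n
      have hs : n - r*i = (n - r*i - 1) + 1 := by omega
      set s : ℕ := n - r*i - 1 with hsdef
      rw [hs, hFn_succ]
      have hbase : ((N:ℚ) - i) + ((s:ℚ)+1) = D := by
        rw [hDdef, hsdef]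
        have : ((n - r*i - 1 : ℕ):ℚ) = (n:ℚ) - (r:ℚ)*(i:ℚ) - 1 := by
          have h1 : ((n - r*i - 1 : ℕ):ℚ) = ((n:ℕ):ℚ) - ((r*i:ℕ):ℚ) - 1 := by
            rw [Nat.cast_sub (by omega), Nat.cast_sub (by omega)]
            norm_num
          rw [h1]; push_cast; ring
        rw [this]; ring
      rw [hbase]
      have hsfac : ((s+1).factorial : ℚ) = ((n - r*i).factorial : ℚ) := by
        rw [hsdef, ← hs]
      rw [hsfac]
      have hpowD : D ^ (n-1) = D ^ s * D ^ (r*i) := by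
        rw [← pow_add]
        congr 1
        omega
      rw [hQdef, hpowD]
      have hnfacne : ((n - r*i).factorial : ℚ) ≠ 0 := by
        exact_mod_cast Nat.factorial_ne_zero _
      have hDpne : D ^ (r*i) ≠ 0 := pow_ne_zero _ hDne
      field_simp
      linear_combination (-((N.descFactorial i : ℚ) * wFn r ^ i * (r.factorial:ℚ)^i *
        ((N:ℚ) - i))) * hfdf
    · -- r*i = n
      have heq : r * i = n := by omega
      have hzero : n - r*i = 0 := by omega
      rw [hzero, hFn_zero]
      have hDeq : D = (N:ℚ) - i := by
        rw [hDdef]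
        have : ((r:ℚ) * i) = (n:ℚ) := by exact_mod_cast congrArg (Nat.cast (R := ℚ)) heq
        ring_nf
        linarith [this]
      have hdfn : (n.descFactorial (r*i) : ℚ) = (n.factorial : ℚ) := by
        rw [heq]; exact_mod_cast congrArg (Nat.cast (R := ℚ)) (Nat.descFactorial_self n)
      have hpowD : D ^ (r*i) = D ^ (n-1) * D := by
        rw [heq, ← pow_succ]
        congr 1
        omega
      rw [hdfn, hpowD, hDeq, hQdef]
      have hNine : ((N:ℚ) - i) ≠ 0 := by rw [← hDeq]; exact hDne
      field_simp
      ring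
  · rw [if_neg hrin]
    have hdf0 : (n.descFactorial (r*i) : ℚ) = 0 := by
      rw [Nat.descFactorial_eq_zero_iff_lt.mpr (by omega)]
      norm_num
    rw [hdf0]
    simp
end

section
/- For the exchangeable negative multinomial model P(ξ_1=k_1,...,ξ_N=k_N) = ((n+Σk_j)!/(n! ∏ k_j!)) p^{Σ k_j} (1−Np)^{n+1} with 0 < Np < 1, the i-th factorial moment of S_n^(r) = Σ_{j=1}^N 1{ξ_j = r} equals c_{i,n} = (N)_i · (n+ri)!/(n!(r!)^i) · (Nβ)^{n+1}/(Nβ+i)^{n+1+ri}, where β = (Np)^{-1} − 1. -/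
open Finset MeasureTheory

lemma geomENN (c : ℕ) {x : ℝ} (hx : 0 ≤ x) (h1 : x < 1) :
    ∑' t : ℕ, ENNReal.ofReal (((t + c).choose c : ℝ) * x ^ t) =
      ENNReal.ofReal (((1 - x) ^ (c + 1))⁻¹) := by
  have hs := hasSum_choose_mul_geometric_of_norm_lt_one (𝕜 := ℝ) c
    (r := x) (by rwa [Real.norm_eq_abs, abs_of_nonneg hx])
  rw [← ENNReal.ofReal_tsum_of_nonneg (fun t => by positivity) hs.summable,
    hs.tsum_eq, one_div]

lemma keysum (M : ℕ) : ∀ (c : ℕ) {x : ℝ}, 0 ≤ x → (M : ℝ) * x < 1 →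
    ∑' g : Fin M → ℕ, ENNReal.ofReal
      (((c + ∑ j, g j).factorial : ℝ) /
        ((c.factorial : ℝ) * ∏ j, ((g j).factorial : ℝ)) * x ^ (∑ j, g j)) =
      ENNReal.ofReal (((1 - M * x) ^ (c + 1))⁻¹) := by
  induction M with
  | zero =>
    intro c x hx h
    rw [tsum_eq_single (fun _ => 0) (fun b hb => absurd (Subsingleton.elim b _) hb)]
    simp [div_self, Nat.cast_ne_zero.2 (Nat.factorial_ne_zero c)]
  | succ M ih =>
    intro c x hx h
    have hMx : (M : ℝ) * x < 1 := by
      push_cast at h ⊢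
      nlinarith
    have h1M : 0 < 1 - (M : ℝ) * x := by linarith
    set y : ℝ := x / (1 - M * x) with hy
    have hy0 : 0 ≤ y := div_nonneg hx h1M.le
    have hy1 : y < 1 := by
      rw [div_lt_one h1M]
      push_cast at h
      linarith
    -- reindex by Fin.cons
    rw [← (Fin.consEquiv (fun _ : Fin (M+1) => ℕ)).tsum_eq, ENNReal.tsum_prod']
    have hterm : ∀ (t : ℕ) (g : Fin M → ℕ),
        (((c + ∑ j, ((Fin.consEquiv (fun _ : Fin (M+1) => ℕ)) (t, g)) j).factorial : ℝ) /
          ((c.factorial : ℝ) * ∏ j, ((((Fin.consEquiv (fun _ : Fin (M+1) => ℕ)) (t, g)) j).factorial : ℝ)) *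
          x ^ (∑ j, ((Fin.consEquiv (fun _ : Fin (M+1) => ℕ)) (t, g)) j))
        = ((((c + t) + ∑ j, g j).factorial : ℝ) /
            (((c + t).factorial : ℝ) * ∏ j, ((g j).factorial : ℝ)) * x ^ (∑ j, g j)) *
          (((c + t).factorial : ℝ) / ((c.factorial : ℝ) * (t.factorial : ℝ)) * x ^ t) := by
      intro t g
      have hsum : ∑ j, ((Fin.consEquiv (fun _ : Fin (M+1) => ℕ)) (t, g)) j = t + ∑ j, g j := by
        simp [Fin.consEquiv, Fin.sum_univ_succ]
      have hprod : ∏ j, ((((Fin.consEquiv (fun _ : Fin (M+1) => ℕ)) (t, g)) j).factorial : ℝ)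
          = (t.factorial : ℝ) * ∏ j, ((g j).factorial : ℝ) := by
        simp [Fin.consEquiv, Fin.prod_univ_succ]
      rw [hsum, hprod]
      have hct : ((c + t).factorial : ℝ) ≠ 0 := Nat.cast_ne_zero.2 (Nat.factorial_ne_zero _)
      rw [pow_add]
      have : c + (t + ∑ j, g j) = (c + t) + ∑ j, g j := by ring
      rw [this]
      field_simp
    have hch : ∀ t : ℕ, (((t + c).choose c : ℕ) : ℝ)
        = ((c + t).factorial : ℝ) / ((c.factorial : ℝ) * (t.factorial : ℝ)) := by
      intro t
      rw [Nat.cast_choose ℝ (by omega : c ≤ t + c),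
        show t + c - c = t from by omega, show t + c = c + t from by omega]
    calc ∑' (t : ℕ) (g : Fin M → ℕ), ENNReal.ofReal
          (((c + ∑ j, ((Fin.consEquiv (fun _ : Fin (M+1) => ℕ)) (t, g)) j).factorial : ℝ) /
            ((c.factorial : ℝ) * ∏ j, ((((Fin.consEquiv (fun _ : Fin (M+1) => ℕ)) (t, g)) j).factorial : ℝ)) *
            x ^ (∑ j, ((Fin.consEquiv (fun _ : Fin (M+1) => ℕ)) (t, g)) j))
        = ∑' t : ℕ, ENNReal.ofReal ((((1 - (M:ℝ) * x) ^ (c + 1))⁻¹) *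
            (((t + c).choose c : ℝ) * y ^ t)) := by
          refine tsum_congr fun t => ?_
          have hA : ∀ g : Fin M → ℕ, 0 ≤ (((c + t) + ∑ j, g j).factorial : ℝ) /
              (((c + t).factorial : ℝ) * ∏ j, ((g j).factorial : ℝ)) * x ^ (∑ j, g j) := by
            intro g
            have : (0:ℝ) < ∏ j, ((g j).factorial : ℝ) :=
              Finset.prod_pos fun j _ => by positivity
            positivity
          calc ∑' g : Fin M → ℕ, ENNReal.ofReal
                (((c + ∑ j, ((Fin.consEquiv (fun _ : Fin (M+1) => ℕ)) (t, g)) j).factorial : ℝ) /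
                  ((c.factorial : ℝ) * ∏ j, ((((Fin.consEquiv (fun _ : Fin (M+1) => ℕ)) (t, g)) j).factorial : ℝ)) *
                  x ^ (∑ j, ((Fin.consEquiv (fun _ : Fin (M+1) => ℕ)) (t, g)) j))
              = ∑' g : Fin M → ℕ, ENNReal.ofReal ((((c + t) + ∑ j, g j).factorial : ℝ) /
                  (((c + t).factorial : ℝ) * ∏ j, ((g j).factorial : ℝ)) * x ^ (∑ j, g j)) *
                  ENNReal.ofReal (((c + t).factorial : ℝ) /
                    ((c.factorial : ℝ) * (t.factorial : ℝ)) * x ^ t) := by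
                refine tsum_congr fun g => ?_
                rw [hterm t g, ENNReal.ofReal_mul (hA g)]
            _ = ENNReal.ofReal (((1 - (M:ℝ) * x) ^ ((c + t) + 1))⁻¹) *
                  ENNReal.ofReal (((c + t).factorial : ℝ) /
                    ((c.factorial : ℝ) * (t.factorial : ℝ)) * x ^ t) := by
                rw [ENNReal.tsum_mul_right, ih (c + t) hx hMx]
            _ = ENNReal.ofReal ((((1 - (M:ℝ) * x) ^ ((c + t) + 1))⁻¹) *
                  (((c + t).factorial : ℝ) / ((c.factorial : ℝ) * (t.factorial : ℝ)) * x ^ t)) := by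
                rw [← ENNReal.ofReal_mul (by positivity)]
            _ = ENNReal.ofReal ((((1 - (M:ℝ) * x) ^ (c + 1))⁻¹) *
                  (((t + c).choose c : ℝ) * y ^ t)) := by
                congr 1
                rw [hch t, hy, div_pow]
                have h2 : (1 - (M:ℝ) * x) ^ ((c + t) + 1)
                    = (1 - (M:ℝ) * x) ^ (c + 1) * (1 - (M:ℝ) * x) ^ t := by
                  rw [← pow_add]; ring_nf
                rw [h2, mul_inv]
                ring
      _ = ENNReal.ofReal (((1 - ((M:ℕ)+1 : ℝ) * x) ^ (c + 1))⁻¹) := by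
          have := geomENN c hy0 hy1
          calc ∑' t : ℕ, ENNReal.ofReal ((((1 - (M:ℝ) * x) ^ (c + 1))⁻¹) *
                (((t + c).choose c : ℝ) * y ^ t))
              = ENNReal.ofReal (((1 - (M:ℝ) * x) ^ (c + 1))⁻¹) *
                ∑' t : ℕ, ENNReal.ofReal (((t + c).choose c : ℝ) * y ^ t) := by
                rw [← ENNReal.tsum_mul_left]
                exact tsum_congr fun t => ENNReal.ofReal_mul (by positivity)
            _ = ENNReal.ofReal (((1 - (M:ℝ) * x) ^ (c + 1))⁻¹) *
                ENNReal.ofReal (((1 - y) ^ (c + 1))⁻¹) := by rw [this]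
            _ = ENNReal.ofReal (((1 - ((M:ℕ)+1 : ℝ) * x) ^ (c + 1))⁻¹) := by
                rw [← ENNReal.ofReal_mul (by positivity), ← mul_inv, ← mul_pow]
                congr 3
                rw [hy]
                field_simp
                ring
      _ = ENNReal.ofReal (((1 - ((M+1 : ℕ) : ℝ) * x) ^ (c + 1))⁻¹) := by push_cast; ring_nf

lemma keysum' (α : Type) [Fintype α] (c : ℕ) {x : ℝ} (hx : 0 ≤ x)
    (h : (Fintype.card α : ℝ) * x < 1) :
    ∑' g : α → ℕ, ENNReal.ofReal (((c + ∑ j, g j).factorial : ℝ) /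
      ((c.factorial : ℝ) * ∏ j, ((g j).factorial : ℝ)) * x ^ (∑ j, g j)) =
    ENNReal.ofReal (((1 - (Fintype.card α : ℝ) * x) ^ (c + 1))⁻¹) := by
  classical
  set M := Fintype.card α with hM
  let e : α ≃ Fin M := Fintype.equivFin α
  let E : (Fin M → ℕ) ≃ (α → ℕ) := Equiv.arrowCongr e.symm (Equiv.refl ℕ)
  rw [← E.tsum_eq]
  have : ∀ h : Fin M → ℕ,
      (((c + ∑ j, (E h) j).factorial : ℝ) /
        ((c.factorial : ℝ) * ∏ j, (((E h) j).factorial : ℝ)) * x ^ (∑ j, (E h) j))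
      = (((c + ∑ j, h j).factorial : ℝ) /
        ((c.factorial : ℝ) * ∏ j, ((h j).factorial : ℝ)) * x ^ (∑ j, h j)) := by
    intro g
    have h1 : ∑ j, (E g) j = ∑ j, g j := by
      simpa [E, Equiv.arrowCongr] using Equiv.sum_comp e g
    have h2 : ∏ j, (((E g) j).factorial : ℝ) = ∏ j, ((g j).factorial : ℝ) := by
      simpa [E, Equiv.arrowCongr] using Equiv.prod_comp e (fun j => ((g j).factorial : ℝ))
    rw [h1, h2]
  rw [tsum_congr fun g => congrArg ENNReal.ofReal (this g)]
  exact keysum M c hx h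
lemma descFactorial_card_eq_sum (N r i : ℕ) (k : Fin N → ℕ) :
    (((Finset.univ.filter fun j : Fin N => k j = r).card.descFactorial i : ℕ) : ℝ) =
      ∑ A ∈ Finset.univ.powersetCard i,
        (if ∀ j ∈ A, k j = r then (i.factorial : ℝ) else 0) := by
  classical
  have h1 : ∀ A : Finset (Fin N),
      (∀ j ∈ A, k j = r) ↔ A ⊆ univ.filter fun j => k j = r := by
    intro A; simp [Finset.subset_iff]
  rw [Finset.sum_congr rfl (fun A _ => by rw [if_congr (h1 A) rfl rfl])]
  rw [Finset.sum_ite, Finset.sum_const, Finset.sum_const_zero, add_zero]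
  have h2 : (univ.powersetCard i).filter (fun A => A ⊆ univ.filter fun j => k j = r)
      = (univ.filter fun j => k j = r).powersetCard i := by
    ext A
    simp only [Finset.mem_powersetCard, Finset.mem_filter, Finset.subset_univ, true_and]
    tauto
  rw [h2, Finset.card_powersetCard, nsmul_eq_mul, Nat.descFactorial_eq_factorial_mul_choose]
  push_cast
  ring

lemma QA_eval (N n r i : ℕ) (p : ℝ) (hp : 0 < p) (hNp : (N : ℝ) * p < 1)
    (μ : Measure (Fin N → ℕ))
    (hμ : ∀ k : Fin N → ℕ, μ {k} =
      ENNReal.ofReal (((n + ∑ j, k j).factorial : ℝ) /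
          ((n.factorial : ℝ) * ∏ j, ((k j).factorial : ℝ)) *
        p ^ (∑ j, k j) * (1 - N * p) ^ (n + 1)))
    (A : Finset (Fin N)) (hA : A.card = i) :
    ∑' k : Fin N → ℕ, (if ∀ j ∈ A, k j = r then ENNReal.ofReal (i.factorial : ℝ) else 0) * μ {k}
      = ENNReal.ofReal ((i.factorial : ℝ) *
          ((((1 - ((N - i : ℕ) : ℝ) * p) ^ ((n + r * i) + 1))⁻¹) *
            (((n + r * i).factorial : ℝ) / ((n.factorial : ℝ) * (r.factorial : ℝ) ^ i) *
              p ^ (r * i) * (1 - N * p) ^ (n + 1)))) := by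
  classical
  have hiN : i ≤ N := by
    rw [← hA]
    simpa using A.card_le_univ
  have hp0 : (0:ℝ) ≤ p := hp.le
  -- the splitting equivalence
  let E2 : ({a // a ∈ A} → ℕ) × ({a // ¬ a ∈ A} → ℕ) ≃ (Fin N → ℕ) :=
  { toFun := fun z j => if hj : j ∈ A then z.1 ⟨j, hj⟩ else z.2 ⟨j, hj⟩
    invFun := fun k => (fun a => k a, fun a => k a)
    left_inv := by
      rintro ⟨h, g⟩
      refine Prod.ext ?_ ?_ <;> · funext a; simp [a.2]
    right_inv := by
      intro k; funext j; by_cases hj : j ∈ A <;> simp [hj] }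
  rw [← E2.tsum_eq, ENNReal.tsum_prod']
  have hcard1 : Fintype.card {a // a ∈ A} = i := by
    rw [← hA]; exact Fintype.card_coe A
  have hcard2 : Fintype.card {a // ¬ a ∈ A} = N - i := by
    rw [Fintype.card_subtype_compl, hcard1, Fintype.card_fin]
  have hcond : ∀ (h : {a // a ∈ A} → ℕ) (g : {a // ¬ a ∈ A} → ℕ),
      (∀ j ∈ A, E2 (h, g) j = r) ↔ h = (fun _ => r) := by
    intro h g
    constructor
    · intro H
      funext a
      have := H a a.2
      simpa [E2, a.2] using this
    · rintro rfl j hj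
      simp [E2, hj]
  have hside : ∀ (h : {a // a ∈ A} → ℕ), h ≠ (fun _ => r) →
      (∑' g : {a // ¬ a ∈ A} → ℕ,
        (if ∀ j ∈ A, E2 (h, g) j = r then ENNReal.ofReal (i.factorial : ℝ) else 0) *
          μ {E2 (h, g)}) = 0 := by
    intro h hh
    have : ∀ g : {a // ¬ a ∈ A} → ℕ,
        (if ∀ j ∈ A, E2 (h, g) j = r then ENNReal.ofReal (i.factorial : ℝ) else 0) *
          μ {E2 (h, g)} = 0 := by
      intro g
      rw [if_neg (fun hc => hh ((hcond h g).1 hc)), zero_mul]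
    simp only [this, tsum_zero]
  rw [tsum_eq_single (fun _ : {a // a ∈ A} => r) hside]
  -- main branch
  have h1Nip : (0:ℝ) < 1 - ((N - i : ℕ) : ℝ) * p := by
    have : ((N - i : ℕ) : ℝ) * p < 1 := by
      rw [Nat.cast_sub hiN]
      have : (0:ℝ) ≤ (i : ℝ) * p := by positivity
      nlinarith
    linarith
  have hsum : ∀ g : {a // ¬ a ∈ A} → ℕ,
      ∑ j, E2 ((fun _ => r), g) j = r * i + ∑ b, g b := by
    intro g
    rw [← Equiv.sum_comp (Equiv.sumCompl (fun j => j ∈ A)), Fintype.sum_sum_type]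
    have h1 : ∀ a : {a // a ∈ A},
        E2 ((fun _ => r), g) ((Equiv.sumCompl (fun j => j ∈ A)) (Sum.inl a)) = r := by
      intro a; simp [E2, a.2]
    have h2 : ∀ b : {a // ¬ a ∈ A},
        E2 ((fun _ => r), g) ((Equiv.sumCompl (fun j => j ∈ A)) (Sum.inr b)) = g b := by
      intro b; simp [E2, b.2]
    simp only [h1, h2, Finset.sum_const, card_univ, hcard1, smul_eq_mul, mul_comm]
  have hprod : ∀ g : {a // ¬ a ∈ A} → ℕ,
      ∏ j, ((E2 ((fun _ => r), g) j).factorial : ℝ)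
        = (r.factorial : ℝ) ^ i * ∏ b, ((g b).factorial : ℝ) := by
    intro g
    rw [← Equiv.prod_comp (Equiv.sumCompl (fun j => j ∈ A)), Fintype.prod_sum_type]
    have h1 : ∀ a : {a // a ∈ A},
        E2 ((fun _ => r), g) ((Equiv.sumCompl (fun j => j ∈ A)) (Sum.inl a)) = r := by
      intro a; simp [E2, a.2]
    have h2 : ∀ b : {a // ¬ a ∈ A},
        E2 ((fun _ => r), g) ((Equiv.sumCompl (fun j => j ∈ A)) (Sum.inr b)) = g b := by
      intro b; simp [E2, b.2]
    simp only [h1, h2, Finset.prod_const, card_univ, hcard1]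
  have hNip : ((N - i : ℕ) : ℝ) * p < 1 := by
    rw [Nat.cast_sub hiN]
    have : (0:ℝ) ≤ (i : ℝ) * p := by positivity
    nlinarith
  calc ∑' g : {a // ¬ a ∈ A} → ℕ,
        (if ∀ j ∈ A, E2 ((fun _ => r), g) j = r then ENNReal.ofReal (i.factorial : ℝ) else 0) *
          μ {E2 ((fun _ => r), g)}
      = ∑' g : {a // ¬ a ∈ A} → ℕ, ENNReal.ofReal (i.factorial : ℝ) *
          (ENNReal.ofReal ((((n + r * i) + ∑ b, g b).factorial : ℝ) /
              (((n + r * i).factorial : ℝ) * ∏ b, ((g b).factorial : ℝ)) * p ^ (∑ b, g b)) *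
           ENNReal.ofReal (((n + r * i).factorial : ℝ) /
              ((n.factorial : ℝ) * (r.factorial : ℝ) ^ i) * p ^ (r * i) *
              (1 - N * p) ^ (n + 1))) := by
        refine tsum_congr fun g => ?_
        rw [if_pos ((hcond _ g).2 rfl), hμ, hsum g, hprod g]
        congr 1
        rw [← ENNReal.ofReal_mul (by
          have : (0:ℝ) < ∏ b, ((g b).factorial : ℝ) :=
            Finset.prod_pos fun b _ => by positivity
          positivity)]
        congr 1
        have hfac : (((n + r * i).factorial : ℝ)) ≠ 0 :=
          Nat.cast_ne_zero.2 (Nat.factorial_ne_zero _)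
        have hgprod : (0:ℝ) < ∏ b, ((g b).factorial : ℝ) :=
          Finset.prod_pos fun b _ => by positivity
        have hshift : n + (r * i + ∑ b, g b) = (n + r * i) + ∑ b, g b := by ring
        rw [hshift, pow_add]
        field_simp
    _ = ENNReal.ofReal (i.factorial : ℝ) *
          ((∑' g : {a // ¬ a ∈ A} → ℕ, ENNReal.ofReal
              ((((n + r * i) + ∑ b, g b).factorial : ℝ) /
                (((n + r * i).factorial : ℝ) * ∏ b, ((g b).factorial : ℝ)) * p ^ (∑ b, g b))) *
            ENNReal.ofReal (((n + r * i).factorial : ℝ) /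
              ((n.factorial : ℝ) * (r.factorial : ℝ) ^ i) * p ^ (r * i) *
              (1 - N * p) ^ (n + 1))) := by
        rw [ENNReal.tsum_mul_left, ENNReal.tsum_mul_right]
    _ = ENNReal.ofReal ((i.factorial : ℝ) *
          ((((1 - ((N - i : ℕ) : ℝ) * p) ^ ((n + r * i) + 1))⁻¹) *
            (((n + r * i).factorial : ℝ) / ((n.factorial : ℝ) * (r.factorial : ℝ) ^ i) *
              p ^ (r * i) * (1 - N * p) ^ (n + 1)))) := by
        rw [keysum' _ (n + r * i) hp0 (by rw [hcard2]; exact hNip), hcard2]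
        have hX : (0:ℝ) ≤ ((1 - ((N - i : ℕ) : ℝ) * p) ^ ((n + r * i) + 1))⁻¹ :=
          inv_nonneg.2 (pow_nonneg h1Nip.le _)
        have h1Np : (0:ℝ) < 1 - (N : ℝ) * p := by linarith
        have hY : (0:ℝ) ≤ ((n + r * i).factorial : ℝ) /
            ((n.factorial : ℝ) * (r.factorial : ℝ) ^ i) * p ^ (r * i) *
            (1 - N * p) ^ (n + 1) :=
          mul_nonneg (mul_nonneg (div_nonneg (by positivity) (by positivity))
            (pow_nonneg hp0 _)) (pow_nonneg h1Np.le _)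
        rw [← ENNReal.ofReal_mul hX, ← ENNReal.ofReal_mul (by positivity)]

theorem negative_multinomial_factorial_moment (N n r i : ℕ) (hN : 0 < N)
    (p : ℝ) (hp : 0 < p) (hNp : (N : ℝ) * p < 1)
    (μ : Measure (Fin N → ℕ)) [IsProbabilityMeasure μ]
    (hμ : ∀ k : Fin N → ℕ, μ {k} =
      ENNReal.ofReal (((n + ∑ j, k j).factorial : ℝ) /
          ((n.factorial : ℝ) * ∏ j, ((k j).factorial : ℝ)) *
        p ^ (∑ j, k j) * (1 - N * p) ^ (n + 1))) :
    ∫ k, ((Finset.univ.filter fun j : Fin N => k j = r).card.descFactorial i : ℝ) ∂μ =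
      (N.descFactorial i : ℝ) * ((n + r * i).factorial / ((n.factorial : ℝ) *
          (r.factorial : ℝ) ^ i)) *
        ((N : ℝ) * (((N : ℝ) * p)⁻¹ - 1)) ^ (n + 1) /
          ((N : ℝ) * (((N : ℝ) * p)⁻¹ - 1) + i) ^ (n + 1 + r * i) := by
  classical
  have h1Np : (0:ℝ) < 1 - (N : ℝ) * p := by linarith
  have hmeas : Measurable (fun k : Fin N → ℕ =>
      ((Finset.univ.filter fun j : Fin N => k j = r).card.descFactorial i : ℝ)) :=
    measurable_of_countable _
  rw [integral_eq_lintegral_of_nonneg_ae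
    (Filter.Eventually.of_forall fun k => by positivity) hmeas.aestronglyMeasurable,
    lintegral_countable']
  have stepA : ∀ k : Fin N → ℕ,
      ENNReal.ofReal ((((Finset.univ.filter fun j : Fin N => k j = r).card.descFactorial i : ℕ) : ℝ))
        * μ {k}
      = ∑ A ∈ Finset.univ.powersetCard i,
          (if ∀ j ∈ A, k j = r then ENNReal.ofReal (i.factorial : ℝ) else 0) * μ {k} := by
    intro k
    rw [descFactorial_card_eq_sum N r i k,
      ENNReal.ofReal_sum_of_nonneg (fun A _ => by positivity), Finset.sum_mul]
    refine Finset.sum_congr rfl fun A _ => ?_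
    congr 1
    split_ifs <;> simp
  rw [tsum_congr stepA, Summable.tsum_finsetSum (fun A _ => ENNReal.summable)]
  rw [Finset.sum_congr rfl (fun A hA =>
    QA_eval N n r i p hp hNp μ hμ A (Finset.mem_powersetCard.1 hA).2),
    Finset.sum_const, Finset.card_powersetCard, card_univ, Fintype.card_fin, nsmul_eq_mul]
  -- toReal
  have h1Nip : (0:ℝ) < 1 - ((N - i : ℕ) : ℝ) * p := by
    have : ((N - i : ℕ) : ℝ) * p ≤ (N : ℝ) * p := by
      have : ((N - i : ℕ) : ℝ) ≤ (N : ℝ) := by exact_mod_cast Nat.cast_le.2 (Nat.sub_le N i)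
      nlinarith
    linarith
  have hq : (0:ℝ) ≤ (i.factorial : ℝ) *
      ((((1 - ((N - i : ℕ) : ℝ) * p) ^ ((n + r * i) + 1))⁻¹) *
        (((n + r * i).factorial : ℝ) / ((n.factorial : ℝ) * (r.factorial : ℝ) ^ i) *
          p ^ (r * i) * (1 - N * p) ^ (n + 1))) := by
    have hX : (0:ℝ) ≤ ((1 - ((N - i : ℕ) : ℝ) * p) ^ ((n + r * i) + 1))⁻¹ :=
      inv_nonneg.2 (pow_nonneg h1Nip.le _)
    have hY : (0:ℝ) ≤ ((n + r * i).factorial : ℝ) /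
        ((n.factorial : ℝ) * (r.factorial : ℝ) ^ i) * p ^ (r * i) * (1 - N * p) ^ (n + 1) :=
      mul_nonneg (mul_nonneg (div_nonneg (by positivity) (by positivity))
        (pow_nonneg hp.le _)) (pow_nonneg h1Np.le _)
    positivity
  rw [ENNReal.toReal_mul, ENNReal.toReal_natCast, ENNReal.toReal_ofReal hq]
  -- final real algebra
  by_cases hiN : i ≤ N
  · have hcast : ((N - i : ℕ) : ℝ) = (N : ℝ) - i := Nat.cast_sub hiN
    have hN0 : (N : ℝ) ≠ 0 := Nat.cast_ne_zero.2 hN.ne'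
    have hp0 : p ≠ 0 := hp.ne'
    have hBeq : (N : ℝ) * (((N : ℝ) * p)⁻¹ - 1) = 1/p - N := by
      field_simp
    have hB : 1/p - (N:ℝ) = (1 - N*p)/p := by
      field_simp
    have hBi : (1 - (N:ℝ)*p)/p + i = (1 - ((N:ℝ) - i)*p)/p := by field_simp; ring
    rw [hBeq, hB, hBi, Nat.descFactorial_eq_factorial_mul_choose, hcast, div_pow, div_pow]
    have h1Nip' : (0:ℝ) < 1 - ((N:ℝ) - i) * p := by rwa [hcast] at h1Nip
    push_cast
    field_simp
    ring
  · have hc : N.choose i = 0 := Nat.choose_eq_zero_of_lt (lt_of_not_ge hiN)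
    have hd : N.descFactorial i = 0 := (Nat.descFactorial_eq_zero_iff_lt).2 (lt_of_not_ge hiN)
    rw [hc, hd]
    simp
end
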